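/- arXiv:2004.03983 — 4 statements merged into one kernel-verified Lean document; each statement's English description precedes it below -/
import Mathlib

section
/- Let p and q be primes satisfying conditions (1), and write the fundamental unit of Q(√(pq)) as ε_pq = a + b√(pq) with positive integers a, b. Then p·(a - 1) is a perfect square, and there exist integers b₁, b₂ such that 2·ε_pq = (b₁√p + b₂√q)² in Q(√p, √q) and q·b₂² - p·b₁² = 2. -/
noncomputable section

open IntermediateField

/-- Conditions (1): `p` and `q` are odd primes with `p ≡ 1 (mod 4)`, `q ≡ 3 (mod 4)`,
`(2/p) = -1`, `(2/q) = 1` and `(p/q) = -1`. -/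
def Cond1 (p q : ℕ) : Prop :=
  p.Prime ∧ q.Prime ∧ p % 4 = 1 ∧ q % 4 = 3 ∧
    jacobiSym 2 p = -1 ∧ jacobiSym 2 q = 1 ∧ jacobiSym (p : ℤ) q = -1

/-- `x` is a unit of the ring of integers of the subfield `K` of `ℝ`. -/
def IsUnitOfIntegers (K : IntermediateField ℚ ℝ) (x : ℝ) : Prop :=
  x ∈ K ∧ IsIntegral ℤ x ∧ IsIntegral ℤ x⁻¹

/-- `ε` is the fundamental unit of `ℚ(√d)`: it is a unit of the ring of integers,
it is `> 1`, and every unit is `±ε^n` for some `n : ℤ`. -/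
def IsFundUnit (d : ℕ) (ε : ℝ) : Prop :=
  1 < ε ∧ IsUnitOfIntegers (adjoin ℚ {Real.sqrt d}) ε ∧
    ∀ x : ℝ, IsUnitOfIntegers (adjoin ℚ {Real.sqrt d}) x →
      ∃ n : ℤ, x = ε ^ n ∨ x = -ε ^ n

open Polynomial in
lemma quad_int (c1 c0 : ℤ) (t : ℝ) (h : t^2 + c1*t + c0 = 0) : IsIntegral ℤ t := by
  refine ⟨X^2 + (C c1 * X + C c0), Polynomial.monic_X_pow_add ?_, ?_⟩
  · exact lt_of_le_of_lt (Polynomial.degree_linear_le) (by norm_num)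
  · simp [-eq_intCast]
    linear_combination h

lemma notSquare (r : ℕ) [Fact r.Prime] (c : ℤ) (hj : jacobiSym c r = -1) (t : ℤ)
    (ht : ((t : ZMod r))^2 = (c : ZMod r)) : False := by
  have h := (legendreSym.eq_neg_one_iff r (a := c)).mp
    (by rw [jacobiSym.legendreSym.to_jacobiSym]; exact hj)
  exact h ⟨(t : ZMod r), by rw [← ht]; ring⟩

lemma negOneNotSquare (r : ℕ) [Fact r.Prime] (hr : r % 4 = 3) (t : ℤ)
    (ht : ((t : ZMod r))^2 = (-1 : ZMod r)) : False := by
  have : IsSquare (-1 : ZMod r) := ⟨(t : ZMod r), by rw [← ht]; ring⟩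
  exact (ZMod.exists_sq_eq_neg_one_iff.mp this) hr

lemma sq_split {c d e : ℤ} (hc : 0 ≤ c) (hd : 0 ≤ d) (h : IsCoprime c d)
    (he : c * d = e^2) : ∃ x y : ℤ, 0 ≤ x ∧ 0 ≤ y ∧ c = x^2 ∧ d = y^2 := by
  obtain ⟨x, hx⟩ := Int.sq_of_isCoprime h he
  obtain ⟨y, hy⟩ := Int.sq_of_isCoprime h.symm (by rw [mul_comm]; exact he)
  refine ⟨|x|, |y|, abs_nonneg x, abs_nonneg y, ?_, ?_⟩
  · rcases hx with hx | hx
    · rw [hx, sq_abs]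
    · have : x^2 = 0 := by nlinarith [sq_nonneg x]
      rw [hx, this, sq_abs, this]; ring
  · rcases hy with hy | hy
    · rw [hy, sq_abs]
    · have : y^2 = 0 := by nlinarith [sq_nonneg y]
      rw [hy, this, sq_abs, this]; ring

lemma split4 {p q m n b : ℤ} (hp : Prime p) (hq : Prime q) (hp0 : 0 < p) (hq0 : 0 < q)
    (hpq : IsCoprime p q) (hm : 0 < m) (hn : 0 < n) (hco : IsCoprime m n)
    (heq : m * n = p * q * b ^ 2) :
    ∃ x y : ℤ, 0 ≤ x ∧ 0 ≤ y ∧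
      ((m = x^2 ∧ n = p*q*y^2) ∨ (m = p*q*x^2 ∧ n = y^2) ∨
       (m = p*x^2 ∧ n = q*y^2) ∨ (m = q*x^2 ∧ n = p*y^2)) := by
  have hpq0 : p * q ≠ 0 := by positivity
  have hpdvd : p ∣ m * n := heq ▸ ⟨q * b^2, by ring⟩
  have hqdvd : q ∣ m * n := heq ▸ ⟨p * b^2, by ring⟩
  rcases (hp.dvd_mul.mp hpdvd) with hpm | hpn <;> rcases (hq.dvd_mul.mp hqdvd) with hqm | hqn
  · obtain ⟨m₂, hm₂⟩ := hpq.mul_dvd hpm hqm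
    have hme : m₂ * n = b^2 := by
      apply mul_left_cancel₀ hpq0
      rw [← mul_assoc, ← hm₂, heq]
    have hm₂0 : 0 ≤ m₂ := by nlinarith
    obtain ⟨x, y, hx0, hy0, hxx, hyy⟩ := sq_split hm₂0 hn.le
      (hco.of_isCoprime_of_dvd_left ⟨p*q, by rw [hm₂]; ring⟩) hme
    exact ⟨x, y, hx0, hy0, Or.inr (Or.inl ⟨by rw [hm₂, hxx], hyy⟩)⟩
  · obtain ⟨m₂, hm₂⟩ := hpm
    obtain ⟨n₂, hn₂⟩ := hqn
    have hme : m₂ * n₂ = b^2 := by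
      apply mul_left_cancel₀ hpq0
      calc p * q * (m₂ * n₂) = (p * m₂) * (q * n₂) := by ring
      _ = p * q * b^2 := by rw [← hm₂, ← hn₂, heq]
    have hm₂0 : 0 ≤ m₂ := by nlinarith
    have hn₂0 : 0 ≤ n₂ := by nlinarith
    have hco₂ : IsCoprime m₂ n₂ :=
      (hco.of_isCoprime_of_dvd_left ⟨p, by rw [hm₂]; ring⟩).of_isCoprime_of_dvd_right
        ⟨q, by rw [hn₂]; ring⟩
    obtain ⟨x, y, hx0, hy0, hxx, hyy⟩ := sq_split hm₂0 hn₂0 hco₂ hme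
    exact ⟨x, y, hx0, hy0, Or.inr (Or.inr (Or.inl ⟨by rw [hm₂, hxx], by rw [hn₂, hyy]⟩))⟩
  · obtain ⟨m₂, hm₂⟩ := hqm
    obtain ⟨n₂, hn₂⟩ := hpn
    have hme : m₂ * n₂ = b^2 := by
      apply mul_left_cancel₀ hpq0
      calc p * q * (m₂ * n₂) = (q * m₂) * (p * n₂) := by ring
      _ = p * q * b^2 := by rw [← hm₂, ← hn₂, heq]
    have hm₂0 : 0 ≤ m₂ := by nlinarith
    have hn₂0 : 0 ≤ n₂ := by nlinarith
    have hco₂ : IsCoprime m₂ n₂ :=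
      (hco.of_isCoprime_of_dvd_left ⟨q, by rw [hm₂]; ring⟩).of_isCoprime_of_dvd_right
        ⟨p, by rw [hn₂]; ring⟩
    obtain ⟨x, y, hx0, hy0, hxx, hyy⟩ := sq_split hm₂0 hn₂0 hco₂ hme
    exact ⟨x, y, hx0, hy0, Or.inr (Or.inr (Or.inr ⟨by rw [hm₂, hxx], by rw [hn₂, hyy]⟩))⟩
  · obtain ⟨n₂, hn₂⟩ := hpq.mul_dvd hpn hqn
    have hme : m * n₂ = b^2 := by
      apply mul_left_cancel₀ hpq0
      calc p * q * (m * n₂) = m * (p * q * n₂) := by ring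
      _ = p * q * b^2 := by rw [← hn₂, heq]
    have hn₂0 : 0 ≤ n₂ := by nlinarith
    obtain ⟨x, y, hx0, hy0, hxx, hyy⟩ := sq_split hm.le hn₂0
      (hco.of_isCoprime_of_dvd_right ⟨p*q, by rw [hn₂]; ring⟩) hme
    exact ⟨x, y, hx0, hy0, Or.inl ⟨hxx, by rw [hn₂, hyy]⟩⟩

open Polynomial in
lemma norm_pm_one {d : ℕ} (hd : ¬ IsSquare d) {a b : ℤ} (hb : b ≠ 0) {ε : ℝ}
    (hε : ε = (a : ℝ) + (b : ℝ) * Real.sqrt d) (hε1 : 1 < ε)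
    (hint : IsIntegral ℤ ε⁻¹) :
    a^2 - (d : ℤ) * b^2 = 1 ∨ a^2 - (d : ℤ) * b^2 = -1 := by
  set s : ℝ := Real.sqrt d with hs_def
  have hs2 : s^2 = (d : ℝ) := Real.sq_sqrt (by positivity)
  have hsirr : Irrational s := irrational_sqrt_natCast_iff.mpr hd
  have hε0 : ε ≠ 0 := by linarith
  set N : ℤ := a^2 - (d : ℤ) * b^2 with hN_def
  have hNr : (N : ℝ) = (a:ℝ)^2 - (d:ℝ) * (b:ℝ)^2 := by push_cast [hN_def]; ring
  have hNz : N ≠ 0 := by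
    intro h0
    have h1 : ((b:ℝ) * s - a) * ((b:ℝ) * s + a) = 0 := by
      have : (0:ℝ) = (a:ℝ)^2 - (d:ℝ)*(b:ℝ)^2 := by rw [← hNr, h0]; norm_num
      nlinarith [hs2]
    have hbR : (b:ℝ) ≠ 0 := Int.cast_ne_zero.mpr hb
    rcases mul_eq_zero.mp h1 with h2 | h2
    · exact hsirr ⟨(a : ℚ)/(b : ℚ), by push_cast; field_simp at h2 ⊢; linarith⟩
    · exact hsirr ⟨(-a : ℚ)/(b : ℚ), by push_cast; field_simp at h2 ⊢; linarith⟩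
  have hNQ : (N : ℚ) ≠ 0 := Int.cast_ne_zero.mpr hNz
  have hquad : ε^2 - 2*(a:ℝ)*ε + (N:ℝ) = 0 := by
    rw [hε, hNr]; nlinarith [hs2]
  set c1 : ℚ := -(2*a)/(N:ℚ) with hc1
  set c0 : ℚ := 1/(N:ℚ) with hc0
  set P : ℚ[X] := X^2 + (C c1 * X + C c0) with hP
  have hPmonic : P.Monic :=
    Polynomial.monic_X_pow_add (lt_of_le_of_lt (Polynomial.degree_linear_le) (by norm_num))
  have hPdeg : P.natDegree = 2 := by rw [hP]; compute_degree!
  have hP0 : Polynomial.aeval (ε⁻¹) P = 0 := by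
    simp only [hP, map_add, map_mul, map_pow, Polynomial.aeval_X, Polynomial.aeval_C]
    have : (algebraMap ℚ ℝ) c1 = -(2*(a:ℝ))/(N:ℝ) := by
      rw [hc1]; push_cast; norm_num
    rw [this]
    have h0 : (algebraMap ℚ ℝ) c0 = 1/(N:ℝ) := by
      rw [hc0]; push_cast; norm_num
    rw [h0]
    have hNR : (N:ℝ) ≠ 0 := Int.cast_ne_zero.mpr hNz
    field_simp
    linear_combination hquad
  have hintQ : IsIntegral ℚ ε⁻¹ := hint.tower_top
  have hdvd : minpoly ℚ ε⁻¹ ∣ P := minpoly.dvd ℚ ε⁻¹ hP0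
  have hεirr : Irrational ε := by
    rw [hε]
    exact ((hsirr.intCast_mul hb).intCast_add a)
  have hinvirr : Irrational ε⁻¹ := by
    intro ⟨r, hr⟩
    apply hεirr
    refine ⟨r⁻¹, ?_⟩
    rw [Rat.cast_inv, hr, inv_inv]
  have hnotrange : ε⁻¹ ∉ (algebraMap ℚ ℝ).range := by
    intro ⟨r, hr⟩
    exact hinvirr ⟨r, hr⟩
  have h2le : 2 ≤ (minpoly ℚ ε⁻¹).natDegree :=
    (minpoly.two_le_natDegree_iff hintQ).mpr hnotrange
  have hmm := minpoly.monic hintQ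
  have hminP : minpoly ℚ ε⁻¹ = P := by
    obtain ⟨c, hc⟩ := hdvd
    have hc0' : c ≠ 0 := by
      intro h
      rw [h, mul_zero] at hc
      exact hPmonic.ne_zero hc
    have hdegs : (minpoly ℚ ε⁻¹).natDegree + c.natDegree = 2 := by
      rw [← hPdeg, hc, Polynomial.natDegree_mul (hmm.ne_zero) hc0']
    have hcdeg : c.natDegree = 0 := by omega
    have hclead : c.leadingCoeff = 1 := by
      have h3 := hPmonic
      rw [hc] at h3
      have h2 := Polynomial.leadingCoeff_mul (minpoly ℚ ε⁻¹) c
      rw [hmm.leadingCoeff, one_mul] at h2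
      rw [Polynomial.Monic, h2] at h3
      exact h3
    have : c = 1 := by
      rw [Polynomial.eq_C_of_natDegree_eq_zero hcdeg]
      rw [Polynomial.eq_C_of_natDegree_eq_zero hcdeg] at hclead
      rw [Polynomial.leadingCoeff_C] at hclead
      rw [hclead]; rfl
    rw [hc, this, mul_one]
  have hmapped := minpoly.isIntegrallyClosed_eq_field_fractions' ℚ hint
  have hcoeff : (minpoly ℚ ε⁻¹).coeff 0 = c0 := by
    rw [hminP, hP]
    simp
  rw [hmapped, Polynomial.coeff_map] at hcoeff
  set k : ℤ := (minpoly ℤ ε⁻¹).coeff 0 with hk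
  have hkQ : (k : ℚ) = c0 := hcoeff
  have hNk : N * k = 1 := by
    have : (N : ℚ) * (k : ℚ) = 1 := by
      rw [hkQ, hc0]; field_simp
    exact_mod_cast this
  rcases Int.isUnit_iff.mp (IsUnit.of_mul_eq_one (a := N) k hNk) with h | h
  · exact Or.inl h
  · exact Or.inr h

lemma mul_primes_not_square {p q : ℕ} (hp : p.Prime) (hq : q.Prime) (hne : p ≠ q) :
    ¬ IsSquare (p*q) := by
  rintro ⟨k, hk⟩
  have h1 : p ∣ k * k := ⟨q, hk.symm⟩
  have hpk : p ∣ k := by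
    rcases (Nat.Prime.dvd_mul hp).mp h1 with h | h <;> exact h
  obtain ⟨t, ht⟩ := hpk
  have hq2 : q = p * t^2 := by
    have : p * q = p * (p * t^2) := by rw [hk, ht]; ring
    exact Nat.eq_of_mul_eq_mul_left hp.pos this
  exact hne ((Nat.prime_dvd_prime_iff_eq hp hq).mp ⟨t^2, hq2⟩)

set_option maxHeartbeats 1000000 in
theorem statement12 (p q : ℕ) (h : Cond1 p q) (εpq : ℝ)
    (hεpq : IsFundUnit (p * q) εpq) (a b : ℤ) (ha : 0 < a) (hb : 0 < b)
    (heq : εpq = (a : ℝ) + (b : ℝ) * Real.sqrt (p * q)) :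
    (∃ s : ℤ, (p : ℤ) * (a - 1) = s ^ 2) ∧
    ∃ b₁ b₂ : ℤ, 2 * εpq = ((b₁ : ℝ) * Real.sqrt p + (b₂ : ℝ) * Real.sqrt q) ^ 2 ∧
      (q : ℤ) * b₂ ^ 2 - (p : ℤ) * b₁ ^ 2 = 2 := by
  obtain ⟨hp, hq, hp4, hq4, hj2p, hj2q, hjpq⟩ := h
  haveI : Fact p.Prime := ⟨hp⟩
  haveI : Fact q.Prime := ⟨hq⟩
  have hne : p ≠ q := fun hh => by rw [hh] at hp4; omega
  have hp5 : 5 ≤ p := by have := hp.two_le; omega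
  have hq3 : 3 ≤ q := by have := hq.two_le; omega
  have hoddp : Odd p := Nat.odd_iff.mpr (by omega)
  have hoddq : Odd q := Nat.odd_iff.mpr (by omega)
  have hnsq : ¬ IsSquare (p * q) := mul_primes_not_square hp hq hne
  have hcast : ((p*q : ℕ) : ℝ) = (p:ℝ) * (q:ℝ) := by push_cast; ring
  have hε1 : 1 < εpq := hεpq.1
  have heq' : εpq = (a : ℝ) + (b : ℝ) * Real.sqrt ((p*q : ℕ) : ℝ) := by
    rw [hcast]; exact heq
  -- the norm of the fundamental unit is 1
  have hNpm := norm_pm_one hnsq (by positivity : b ≠ 0) heq' hε1 hεpq.2.1.2.2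
  have hN : a^2 - ((p*q : ℕ) : ℤ) * b^2 = 1 := by
    rcases hNpm with hh | hh
    · exact hh
    · exfalso
      have key : a^2 - ((p*q : ℕ) : ℤ) * b^2 = -1 := hh
      have hcastz := congrArg (fun z : ℤ => (z : ZMod q)) key
      push_cast at hcastz
      simp [ZMod.natCast_self] at hcastz
      exact negOneNotSquare q hq4 a (by linear_combination hcastz)
  have hNz : a^2 - (p : ℤ) * (q : ℤ) * b^2 = 1 := by push_cast at hN ⊢; linarith
  -- a ≥ 2
  have hp5' : (5 : ℤ) ≤ (p : ℤ) := by exact_mod_cast hp5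
  have hq3' : (3 : ℤ) ≤ (q : ℤ) := by exact_mod_cast hq3
  have hb1 : 1 ≤ b := hb
  have hbsq : 1 ≤ b^2 := by nlinarith
  have h15 : (15:ℤ) ≤ (p:ℤ)*(q:ℤ) := by nlinarith
  have h16 : (16:ℤ) ≤ a^2 := by
    nlinarith [mul_le_mul h15 hbsq (by norm_num : (0:ℤ) ≤ 1) (by positivity : (0:ℤ) ≤ (p:ℤ)*(q:ℤ))]
  have ha2 : 2 ≤ a := by nlinarith
  have hPp : Prime (p : ℤ) := Int.prime_iff_natAbs_prime.mpr (by simpa using hp)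
  have hPq : Prime (q : ℤ) := Int.prime_iff_natAbs_prime.mpr (by simpa using hq)
  have hcopq : IsCoprime (p : ℤ) (q : ℤ) := by
    rw [Int.isCoprime_iff_gcd_eq_one]
    exact_mod_cast (Nat.coprime_primes hp hq).mpr hne
  have hp0 : (0 : ℤ) < p := by linarith
  have hq0 : (0 : ℤ) < q := by linarith
  -- key facts about √p, √q, √(pq)
  have hsp2 : Real.sqrt p ^ 2 = (p : ℝ) := Real.sq_sqrt (by positivity)
  have hsq2 : Real.sqrt q ^ 2 = (q : ℝ) := Real.sq_sqrt (by positivity)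
  have hspq : Real.sqrt ((p:ℝ) * (q:ℝ)) = Real.sqrt p * Real.sqrt q :=
    Real.sqrt_mul (by positivity) _
  have hspq2 : Real.sqrt ((p:ℝ) * (q:ℝ)) ^ 2 = (p:ℝ) * (q:ℝ) := Real.sq_sqrt (by positivity)
  rcases Int.even_or_odd a with haeven | haodd
  · -- a even : gcd(a-1, a+1) = 1
    have hco : IsCoprime (a - 1) (a + 1) := by
      rw [Int.isCoprime_iff_gcd_eq_one]
      have hd1 : (Int.gcd (a-1) (a+1) : ℤ) ∣ (a - 1) := Int.gcd_dvd_left _ _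
      have hd2 : (Int.gcd (a-1) (a+1) : ℤ) ∣ (a + 1) := Int.gcd_dvd_right _ _
      have hd3 : (Int.gcd (a-1) (a+1) : ℤ) ∣ 2 := by
        have := dvd_sub hd2 hd1
        simpa using this
      have hd4 : Int.gcd (a-1) (a+1) ∣ 2 := by exact_mod_cast hd3
      rcases (Nat.dvd_prime Nat.prime_two).mp hd4 with hg | hg
      · exact hg
      · exfalso
        rw [hg] at hd1
        obtain ⟨j, hj⟩ := haeven
        obtain ⟨k, hk⟩ := hd1
        omega
    have hmn : (a - 1) * (a + 1) = (p:ℤ) * q * b^2 := by linarith [hNz]; 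
    obtain ⟨x, y, hx0, hy0, hcases⟩ := split4 hPp hPq hp0 hq0 hcopq
      (by omega : (0:ℤ) < a - 1) (by omega : (0:ℤ) < a + 1) hco hmn
    rcases hcases with ⟨hm, hn⟩ | ⟨hm, hn⟩ | ⟨hm, hn⟩ | ⟨hm, hn⟩
    · -- a-1 = x², a+1 = pq y² : contradiction mod p with -2
      exfalso
      have key : (p:ℤ)*q*y^2 - x^2 = 2 := by linarith [hm, hn]
      have hcastz := congrArg (fun z : ℤ => (z : ZMod p)) key
      push_cast at hcastz
      simp [ZMod.natCast_self] at hcastz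
      have hjm2 : jacobiSym (-2) p = -1 := by
        have h2 : ((-2 : ℤ)) = (-1) * 2 := by norm_num
        rw [h2, jacobiSym.mul_left, jacobiSym.at_neg_one hoddp,
          ZMod.χ₄_nat_one_mod_four hp4, one_mul]
        exact hj2p
      exact notSquare p (-2) hjm2 x (by push_cast; linear_combination -hcastz)
    · -- a-1 = pq x², a+1 = y² : contradiction mod p with 2
      exfalso
      have key : y^2 - (p:ℤ)*q*x^2 = 2 := by linarith [hm, hn]
      have hcastz := congrArg (fun z : ℤ => (z : ZMod p)) key
      push_cast at hcastz
      simp [ZMod.natCast_self] at hcastz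
      exact notSquare p 2 hj2p y (by push_cast; linear_combination hcastz)
    · -- the good case : a-1 = p x², a+1 = q y²
      have hxy : x * y = b := by
        have hsq : (p:ℤ) * q * (x*y)^2 = (p:ℤ) * q * b^2 := by
          calc (p:ℤ) * q * (x*y)^2 = ((p:ℤ)*x^2) * ((q:ℤ)*y^2) := by ring
          _ = (a-1)*(a+1) := by rw [← hm, ← hn]
          _ = (p:ℤ) * q * b^2 := hmn
        have h2 : (x*y)^2 = b^2 := by
          have hpq0 : (p:ℤ) * q ≠ 0 := by positivity
          exact mul_left_cancel₀ hpq0 hsq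
        have h3 : (x*y - b)*(x*y + b) = 0 := by linear_combination h2
        rcases mul_eq_zero.mp h3 with h4 | h4
        · linarith
        · linarith [mul_nonneg hx0 hy0]
      refine ⟨⟨(p:ℤ)*x, by rw [hm]; ring⟩, x, y, ?_, by linarith [hm, hn]⟩
      rw [heq]
      have hmR : (a:ℝ) - 1 = (p:ℝ) * (x:ℝ)^2 := by exact_mod_cast hm
      have hnR : (a:ℝ) + 1 = (q:ℝ) * (y:ℝ)^2 := by exact_mod_cast hn
      have hxyR : (x:ℝ) * (y:ℝ) = (b:ℝ) := by exact_mod_cast hxy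
      rw [hspq]
      linear_combination -(x:ℝ)^2 * hsp2 - (y:ℝ)^2 * hsq2 + hmR + hnR -
        2*(Real.sqrt p * Real.sqrt q)*hxyR
    · -- a-1 = q x², a+1 = p y² : contradiction mod q with 2p
      exfalso
      have key : (p:ℤ)*y^2 - (q:ℤ)*x^2 = 2 := by linarith [hm, hn]
      have key2 : ((p:ℤ)*y)^2 - (p:ℤ)*(q:ℤ)*x^2 = 2*p := by linear_combination (p:ℤ)*key
      have hcastz := congrArg (fun z : ℤ => (z : ZMod q)) key2
      push_cast at hcastz
      simp [ZMod.natCast_self] at hcastz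
      have hj2pq : jacobiSym (2*(p:ℤ)) q = -1 := by
        rw [jacobiSym.mul_left]
        rw [hj2q, hjpq]; norm_num
      exact notSquare q (2*p) hj2pq ((p:ℤ)*y) (by push_cast; linear_combination hcastz)
  · -- a odd
    obtain ⟨k, hk⟩ := haodd
    have hb2 : (2:ℤ) ∣ b := by
      have h2 : (2:ℤ) ∣ (p:ℤ)*q*b^2 := ⟨2*k*(k+1), by linear_combination -hNz + (a+2*k+1)*hk⟩
      rcases (Int.prime_two.dvd_mul).mp h2 with h3 | h3
      · exfalso
        rcases (Int.prime_two.dvd_mul).mp h3 with h4 | h4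
        · have : (2:ℕ) ∣ p := by exact_mod_cast h4
          omega
        · have : (2:ℕ) ∣ q := by exact_mod_cast h4
          omega
      · exact Int.prime_two.dvd_of_dvd_pow h3
    obtain ⟨b', hb'⟩ := hb2
    have hkk : k * (k+1) = (p:ℤ) * q * b'^2 := by
      have h4 : (4:ℤ) * (k*(k+1)) = 4 * ((p:ℤ)*q*b'^2) := by
        linear_combination hNz - (a+2*k+1)*hk + (p:ℤ)*(q:ℤ)*(b+2*b')*hb'
      linarith
    have hk1 : 1 ≤ k := by omega
    have hcok : IsCoprime k (k+1) := ⟨-1, 1, by ring⟩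
    obtain ⟨x, y, hx0, hy0, hcases⟩ := split4 hPp hPq hp0 hq0 hcopq
      (by omega : (0:ℤ) < k) (by omega : (0:ℤ) < k + 1) hcok hkk
    exfalso
    rcases hcases with ⟨hm, hn⟩ | ⟨hm, hn⟩ | ⟨hm, hn⟩ | ⟨hm, hn⟩
    · -- k = x², k+1 = pq y² : -1 square mod q
      have key : (p:ℤ)*q*y^2 - x^2 = 1 := by linarith [hm, hn]
      have hcastz := congrArg (fun z : ℤ => (z : ZMod q)) key
      push_cast at hcastz
      simp [ZMod.natCast_self] at hcastz
      exact negOneNotSquare q hq4 x (by push_cast; linear_combination -hcastz)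
    · -- k = pq x², k+1 = y² : εpq is a square of a smaller unit
      have hx1 : 1 ≤ x := by
        rcases hx0.lt_or_eq with h' | h'
        · exact h'
        · exfalso; rw [← h'] at hm; norm_num at hm; omega
      have hy1 : 1 ≤ y := by
        rcases hy0.lt_or_eq with h' | h'
        · exact h'
        · exfalso; rw [← h'] at hn; norm_num at hn; omega
      set s : ℝ := Real.sqrt ((p*q : ℕ) : ℝ) with hs_def
      have hs2 : s^2 = (p:ℝ)*(q:ℝ) := by rw [hs_def, hcast]; exact hspq2
      have hs0 : 0 ≤ s := Real.sqrt_nonneg _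
      set η : ℝ := (y:ℝ) + (x:ℝ) * s with hη_def
      have hxy : 2 * (x * y) = b := by
        have hsq : (p:ℤ) * q * (x*y)^2 = (p:ℤ) * q * b'^2 := by
          calc (p:ℤ) * q * (x*y)^2 = ((p:ℤ)*q*x^2) * y^2 := by ring
          _ = k*(k+1) := by rw [← hm, ← hn]
          _ = (p:ℤ) * q * b'^2 := hkk
        have h2 : (x*y)^2 = b'^2 := by
          have hpq0 : (p:ℤ) * q ≠ 0 := by positivity
          exact mul_left_cancel₀ hpq0 hsq
        have h3 : (x*y - b')*(x*y + b') = 0 := by linear_combination h2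
        have hb'0 : 0 < b' := by omega
        rcases mul_eq_zero.mp h3 with h4 | h4
        · rw [hb']; linarith [h4]
        · exfalso; linarith [mul_nonneg hx0 hy0]
      have hmR : (k:ℝ) = (p:ℝ)*(q:ℝ)*(x:ℝ)^2 := by exact_mod_cast hm
      have hnR : (k:ℝ) + 1 = (y:ℝ)^2 := by exact_mod_cast hn
      have haR : (a:ℝ) = 2*(k:ℝ) + 1 := by exact_mod_cast hk
      have hbR : (b:ℝ) = 2*((x:ℝ)*(y:ℝ)) := by exact_mod_cast hxy.symm
      have hη2 : η^2 = εpq := by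
        rw [heq', hη_def]
        linear_combination (x:ℝ)^2 * hs2 - hmR - hnR - haR - s*hbR
      have hquadη : η^2 + (-(2*y):ℤ)*η + (1:ℤ) = 0 := by
        push_cast
        rw [hη_def]
        linear_combination (x:ℝ)^2 * hs2 - hmR + hnR
      have hηinv : η⁻¹ = 2*(y:ℝ) - η := by
        have hmul : η * (2*(y:ℝ) - η) = 1 := by push_cast at hquadη; linear_combination -hquadη
        exact (inv_eq_of_mul_eq_one_right hmul)
      have hη_mem : η ∈ adjoin ℚ {Real.sqrt ((p*q : ℕ) : ℝ)} := by
        have hsmem : Real.sqrt ((p*q : ℕ) : ℝ) ∈ adjoin ℚ {Real.sqrt ((p*q : ℕ) : ℝ)} :=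
          IntermediateField.subset_adjoin ℚ _ (Set.mem_singleton _)
        rw [hη_def, hs_def]
        exact add_mem (IntermediateField.intCast_mem _ y)
          (mul_mem (IntermediateField.intCast_mem _ x) hsmem)
      have hηint : IsIntegral ℤ η := quad_int (-(2*y)) 1 η hquadη
      have hηinvint : IsIntegral ℤ η⁻¹ := by
        rw [hηinv]
        apply quad_int (-(2*y)) 1
        push_cast at hquadη ⊢
        linear_combination hquadη
      obtain ⟨nn, hnn⟩ := hεpq.2.2 η ⟨hη_mem, hηint, hηinvint⟩
      have hε0 : (0:ℝ) < εpq := by linarith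
      have hηpos : 0 < η := by
        rw [hη_def]
        have h1 : (1:ℝ) ≤ (y:ℝ) := by exact_mod_cast hy1
        have h2 : (0:ℝ) ≤ (x:ℝ) * s := mul_nonneg (by exact_mod_cast hx0) hs0
        linarith
      have hηeq : η = εpq ^ nn := by
        rcases hnn with h' | h'
        · exact h'
        · exfalso
          have := zpow_pos hε0 nn
          rw [h'] at hηpos
          linarith
      have hzz : εpq ^ (nn * 2) = εpq ^ (1:ℤ) := by
        rw [zpow_one, zpow_mul, ← hηeq, ← hη2, zpow_two, sq]
      have := zpow_right_injective₀ hε0 (by linarith : εpq ≠ 1) hzz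
      omega
    · -- k = p x², k+1 = q y² : q is a square mod p
      have key : (q:ℤ)*y^2 - (p:ℤ)*x^2 = 1 := by linarith [hm, hn]
      have key2 : ((q:ℤ)*y)^2 - (p:ℤ)*(q:ℤ)*x^2 = (q:ℤ) := by linear_combination (q:ℤ)*key
      have hcastz := congrArg (fun z : ℤ => (z : ZMod p)) key2
      push_cast at hcastz
      simp [ZMod.natCast_self] at hcastz
      have hjq : jacobiSym (q:ℤ) p = -1 := by
        have hrec := jacobiSym.quadratic_reciprocity_one_mod_four hp4 hoddq
        rw [← hrec]
        exact hjpq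
      exact notSquare p (q:ℤ) hjq ((q:ℤ)*y) (by push_cast; linear_combination hcastz)
    · -- k = q x², k+1 = p y² : p is a square mod q
      have key : (p:ℤ)*y^2 - (q:ℤ)*x^2 = 1 := by linarith [hm, hn]
      have key2 : ((p:ℤ)*y)^2 - (p:ℤ)*(q:ℤ)*x^2 = (p:ℤ) := by linear_combination (p:ℤ)*key
      have hcastz := congrArg (fun z : ℤ => (z : ZMod q)) key2
      push_cast at hcastz
      simp [ZMod.natCast_self] at hcastz
      exact notSquare q (p:ℤ) hjpq ((p:ℤ)*y) (by push_cast; linear_combination hcastz)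
end
end

section
/- Let p and q be primes satisfying conditions (1), and write the fundamental unit of Q(√(2pq)) as ε_2pq = x + y√(2pq) with positive integers x, y. Then 2p·(x - 1) is a perfect square, and there exist integers y₁, y₂ such that 2·ε_2pq = (y₁√(2p) + y₂√q)² in Q(√(2p), √q) and q·y₂² - 2p·y₁² = 2. -/
noncomputable section

open IntermediateField Polynomial

lemma isSquare_of_dvd' {r : ℕ} {c t : ℤ} (h : (r:ℤ) ∣ t^2 - c) : IsSquare ((c : ZMod r)) := by
  have h0 : ((t^2 - c : ℤ) : ZMod r) = 0 := (ZMod.intCast_zmod_eq_zero_iff_dvd _ r).mpr h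
  push_cast at h0
  exact ⟨(t : ZMod r), by linear_combination -h0⟩

lemma isSquare_inv' {F : Type*} [Field F] {u : F} (h : IsSquare u) : IsSquare u⁻¹ := by
  obtain ⟨r, rfl⟩ := h; exact ⟨r⁻¹, by rw [mul_inv]⟩

lemma isIntegral_sqrt_nat (d : ℕ) : IsIntegral ℤ (Real.sqrt d) := by
  refine ⟨X^2 - C (d:ℤ), Polynomial.monic_X_pow_sub_C _ two_ne_zero, ?_⟩
  have h : Real.sqrt d ^ 2 = (d:ℝ) := Real.sq_sqrt (by positivity)
  simp [Polynomial.eval₂_sub, h]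

lemma isIntegral_int_cast (n : ℤ) : IsIntegral ℤ ((n:ℝ)) := by
  have := isIntegral_algebraMap (x := n) (A := ℝ) (R := ℤ)
  simpa using this


lemma irr_sqrt {d : ℕ} (hd : ∀ t : ℤ, t ^ 2 ≠ (d : ℤ)) : Irrational (Real.sqrt d) := by
  refine irrational_nrt_of_notint_nrt 2 (d : ℤ)
    (by rw [Real.sq_sqrt (by positivity : (0:ℝ) ≤ (d:ℕ))]; norm_cast) ?_ two_pos
  rintro ⟨t, ht⟩
  have h1 : ((t:ℝ))^2 = ((d:ℕ):ℝ) := by rw [← ht, Real.sq_sqrt (by positivity)]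
  have h2 : t^2 = (d:ℤ) := by exact_mod_cast h1
  exact hd t h2

lemma norm_unit_eq {d : ℕ} (hirr : Irrational (Real.sqrt d)) {x y : ℤ} (hy : y ≠ 0)
    {ε : ℝ} (hε : ε = (x:ℝ) + (y:ℝ) * Real.sqrt d) (hint : IsIntegral ℤ ε⁻¹) :
    x ^ 2 - (d:ℤ) * y ^ 2 = 1 ∨ x ^ 2 - (d:ℤ) * y ^ 2 = -1 := by
  have hsq : Real.sqrt d ^ 2 = (d:ℝ) := Real.sq_sqrt (by positivity)
  have hirr_ε : Irrational ε := by
    rw [hε]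
    exact (hirr.intCast_mul hy).intCast_add x
  have hne : ε ≠ 0 := hirr_ε.ne_zero
  set N : ℤ := x ^ 2 - (d:ℤ) * y ^ 2 with hN
  have hNne : N ≠ 0 := by
    intro h0
    have hxy : (x:ℝ) ^ 2 = (d:ℝ) * (y:ℝ) ^ 2 := by
      have : (x:ℝ)^2 - (d:ℝ)*(y:ℝ)^2 = ((N : ℤ) : ℝ) := by push_cast [hN]; ring
      rw [h0] at this; push_cast at this; linarith
    have hyR : (y:ℝ) ≠ 0 := Int.cast_ne_zero.mpr hy
    have : Real.sqrt d = |(x:ℝ)/(y:ℝ)| := by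
      rw [show (d:ℝ) = ((x:ℝ)/(y:ℝ))^2 by field_simp; linarith [hxy]]
      exact Real.sqrt_sq_eq_abs _
    exact hirr ⟨|(x:ℚ)/(y:ℚ)|, by push_cast; rw [this]⟩
  have hquad : ε ^ 2 - 2 * (x:ℝ) * ε + (N:ℝ) = 0 := by
    rw [hε]; push_cast [hN]
    nlinarith [hsq]
  set a : ℝ := ε⁻¹ with ha
  have hainv : ε * a = 1 := mul_inv_cancel₀ hne
  have haquad : (N:ℝ) * a ^ 2 - 2 * (x:ℝ) * a + 1 = 0 := by
    linear_combination a^2 * hquad + (2*(x:ℝ)*a - ε*a - 1) * hainv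
  have hNQ' : (N:ℚ) ≠ 0 := Int.cast_ne_zero.mpr hNne
  set c1 : ℚ := -(2*x) / N with hc1
  set c0 : ℚ := 1 / N with hc0
  set P : ℚ[X] := X ^ 2 + (C c1 * X + C c0) with hPdef
  have haP : aeval a P = 0 := by
    simp only [hPdef, map_add, map_mul, aeval_X_pow, aeval_X, aeval_C]
    have e1 : (algebraMap ℚ ℝ) c1 = -(2*(x:ℝ)) / ((N:ℤ):ℝ) := by
      rw [hc1]; push_cast; norm_num
    have e0 : (algebraMap ℚ ℝ) c0 = 1 / ((N:ℤ):ℝ) := by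
      rw [hc0]; push_cast; norm_num
    rw [e1, e0]
    have hNR : ((N:ℤ):ℝ) ≠ 0 := Int.cast_ne_zero.mpr hNne
    field_simp
    linear_combination haquad
  have hPmonic : P.Monic := by
    apply Polynomial.monic_X_pow_add
    exact lt_of_le_of_lt (Polynomial.degree_linear_le) (by norm_num)
  have haIntQ : IsIntegral ℚ a := hint.tower_top
  have hdvd : minpoly ℚ a ∣ P := minpoly.dvd ℚ a haP
  have hPdeg : P.natDegree = 2 := by
    have hdeg : P.degree = 2 := by
      rw [hPdef]
      rw [Polynomial.degree_add_eq_left_of_degree_lt]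
      · exact Polynomial.degree_X_pow 2
      · rw [Polynomial.degree_X_pow]
        exact lt_of_le_of_lt (Polynomial.degree_linear_le) (by norm_num)
    exact Polynomial.natDegree_eq_of_degree_eq_some hdeg
  have hmindeg : (minpoly ℚ a).natDegree = 2 := by
    obtain ⟨g, hg⟩ := hdvd
    have hPn0 : P ≠ 0 := hPmonic.ne_zero
    have hgne : g ≠ 0 := by rintro rfl; rw [mul_zero] at hg; exact hPn0 hg
    have hsum : (minpoly ℚ a).natDegree + g.natDegree = 2 := by
      rw [← Polynomial.natDegree_mul (minpoly.ne_zero haIntQ) hgne, ← hg, hPdeg]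
    have h1 : 0 < (minpoly ℚ a).natDegree := minpoly.natDegree_pos haIntQ
    have hnot1 : (minpoly ℚ a).natDegree ≠ 1 := by
      intro h1'
      have hdeg1 : (minpoly ℚ a).degree = 1 := by
        rw [Polynomial.degree_eq_natDegree (minpoly.ne_zero haIntQ), h1']; rfl
      obtain ⟨r, hr⟩ := (minpoly.degree_eq_one_iff).mp hdeg1
      exact hirr_ε.inv ⟨r, hr⟩
    omega
  have hminP : minpoly ℚ a = P := by
    obtain ⟨g, hg⟩ := hdvd
    have hgne : g ≠ 0 := by rintro rfl; rw [mul_zero] at hg; exact hPmonic.ne_zero hg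
    have hgdeg : g.natDegree = 0 := by
      have hh := Polynomial.natDegree_mul (minpoly.ne_zero haIntQ) hgne
      rw [← hg, hPdeg, hmindeg] at hh; omega
    have hglead : g.leadingCoeff = 1 := by
      have hm2 := hPmonic
      rw [hg] at hm2
      have h2 : (minpoly ℚ a * g).leadingCoeff = (minpoly ℚ a).leadingCoeff * g.leadingCoeff :=
        Polynomial.leadingCoeff_mul _ _
      rw [Polynomial.Monic.def.mp hm2, (minpoly.monic haIntQ).leadingCoeff, one_mul] at h2
      exact h2.symm
    have hg1 : g = 1 := by
      rw [Polynomial.eq_C_of_natDegree_eq_zero hgdeg]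
      rw [Polynomial.eq_C_of_natDegree_eq_zero hgdeg, Polynomial.leadingCoeff_C] at hglead
      rw [hglead]; rfl
    rw [hg, hg1, mul_one]
  have hmap : minpoly ℚ a = (minpoly ℤ a).map (algebraMap ℤ ℚ) :=
    minpoly.isIntegrallyClosed_eq_field_fractions' ℚ hint
  have hcoeff : (((minpoly ℤ a).coeff 0 : ℤ) : ℚ) = c0 := by
    have hc : (minpoly ℚ a).coeff 0 = c0 := by
      rw [hminP, hPdef]
      simp [Polynomial.coeff_X_pow]
    rw [hmap] at hc
    simpa using hc
  have hcast : (N : ℚ) * ((minpoly ℤ a).coeff 0 : ℚ) = 1 := by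
    rw [hcoeff, hc0]; field_simp
  have hmul : N * (minpoly ℤ a).coeff 0 = 1 := by exact_mod_cast hcast
  rcases Int.isUnit_iff.mp (IsUnit.of_mul_eq_one _ hmul) with h | h
  · exact Or.inl h
  · exact Or.inr h
lemma split_factor {d₁ d₂ k y' : ℤ} (hd₁ : 0 < d₁)
    (h1 : d₁ ∣ k) (h2 : d₂ ∣ k + 1) (hk : 0 < k) (hd₂ : 0 < d₂)
    (hprod : k * (k + 1) = d₁ * d₂ * y' ^ 2) :
    ∃ a b : ℤ, 0 ≤ a ∧ 0 ≤ b ∧ k = d₁ * a ^ 2 ∧ k + 1 = d₂ * b ^ 2 ∧ y' ^ 2 = (a * b) ^ 2 := by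
  obtain ⟨m, hm⟩ := h1
  obtain ⟨n, hn⟩ := h2
  have hmn : m * n = y' ^ 2 := by
    have h12 : d₁ * d₂ ≠ 0 := by positivity
    refine mul_left_cancel₀ h12 ?_
    calc d₁ * d₂ * (m * n) = (d₁ * m) * (d₂ * n) := by ring
      _ = k * (k + 1) := by rw [← hm, ← hn]
      _ = d₁ * d₂ * y' ^ 2 := hprod
  have hco : IsCoprime k (k + 1) := ⟨-1, 1, by ring⟩
  have hcomn : IsCoprime m n :=
    (hco.of_isCoprime_of_dvd_left ⟨d₁, by rw [hm]; ring⟩).of_isCoprime_of_dvd_right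
      ⟨d₂, by rw [hn]; ring⟩
  have hmpos : 0 < m := by
    rcases lt_trichotomy m 0 with h | h | h
    · nlinarith
    · rw [h, mul_zero] at hm; omega
    · exact h
  have hnpos : 0 < n := by
    rcases lt_trichotomy n 0 with h | h | h
    · nlinarith
    · rw [h, mul_zero] at hn; omega
    · exact h
  obtain ⟨a0, ha0⟩ := Int.sq_of_isCoprime hcomn hmn
  obtain ⟨b0, hb0⟩ := Int.sq_of_isCoprime hcomn.symm (by rw [← hmn]; ring)
  have ha : m = a0 ^ 2 := by
    rcases ha0 with h | h
    · exact h
    · exfalso; nlinarith [sq_nonneg a0]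
  have hb : n = b0 ^ 2 := by
    rcases hb0 with h | h
    · exact h
    · exfalso; nlinarith [sq_nonneg b0]
  refine ⟨|a0|, |b0|, abs_nonneg _, abs_nonneg _, ?_, ?_, ?_⟩
  · rw [hm, ha, sq_abs]
  · rw [hn, hb, sq_abs]
  · rw [← hmn, ha, hb, mul_pow, sq_abs, sq_abs]
set_option maxHeartbeats 2000000 in
theorem statement13 (p q : ℕ) (h : Cond1 p q) (ε2pq : ℝ)
    (hε2pq : IsFundUnit (2 * p * q) ε2pq) (x y : ℤ) (hx : 0 < x) (hy : 0 < y)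
    (heq : ε2pq = (x : ℝ) + (y : ℝ) * Real.sqrt (2 * p * q)) :
    (∃ s : ℤ, 2 * (p : ℤ) * (x - 1) = s ^ 2) ∧
    ∃ y₁ y₂ : ℤ, 2 * ε2pq = ((y₁ : ℝ) * Real.sqrt (2 * p) + (y₂ : ℝ) * Real.sqrt q) ^ 2 ∧
      (q : ℤ) * y₂ ^ 2 - 2 * (p : ℤ) * y₁ ^ 2 = 2 := by
  obtain ⟨hp, hq, hp4, hq4, hj2p, hj2q, hjpq⟩ := h
  haveI hpf : Fact p.Prime := ⟨hp⟩
  haveI hqf : Fact q.Prime := ⟨hq⟩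
  have hp2 : p ≠ 2 := by rintro rfl; omega
  have hq2 : q ≠ 2 := by rintro rfl; omega
  have hp3 : 3 ≤ p := by have := hp.two_le; omega
  have hq3 : 3 ≤ q := by have := hq.two_le; omega
  have hpq : p ≠ q := by rintro rfl; rw [hj2p] at hj2q; norm_num at hj2q
  have hpZ : Prime (p:ℤ) := Nat.prime_iff_prime_int.mp hp
  have hqZ : Prime (q:ℤ) := Nat.prime_iff_prime_int.mp hq
  have h2Z : Prime (2:ℤ) := Int.prime_two
  -- Legendre symbol facts
  have hleg2p : ¬ IsSquare ((2:ℤ) : ZMod p) :=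
    (legendreSym.eq_neg_one_iff p).mp (by rw [jacobiSym.legendreSym.to_jacobiSym]; exact hj2p)
  have hlegpq : ¬ IsSquare (((p:ℤ)) : ZMod q) :=
    (legendreSym.eq_neg_one_iff q).mp (by rw [jacobiSym.legendreSym.to_jacobiSym]; exact hjpq)
  have hlegqp : ¬ IsSquare (((q:ℤ)) : ZMod p) := by
    apply (legendreSym.eq_neg_one_iff p).mp
    rw [← legendreSym.quadratic_reciprocity_one_mod_four hp4 hq2]
    rw [jacobiSym.legendreSym.to_jacobiSym]; exact hjpq
  have h2q0 : ((2:ℤ) : ZMod q) ≠ 0 := by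
    rw [Ne, ZMod.intCast_zmod_eq_zero_iff_dvd]
    intro hdvd
    have := Int.le_of_dvd (by norm_num) hdvd
    omega
  have hsq2q : IsSquare ((2:ℤ) : ZMod q) :=
    (legendreSym.eq_one_iff q h2q0).mp (by rw [jacobiSym.legendreSym.to_jacobiSym]; exact hj2q)
  have hsqneg1p : IsSquare (-1 : ZMod p) := ZMod.exists_sq_eq_neg_one_iff.mpr (by omega)
  have hnsqneg1q : ¬ IsSquare (-1 : ZMod q) := by
    rw [ZMod.exists_sq_eq_neg_one_iff]; omega
  -- setup D and irrationality
  set D : ℕ := 2*p*q with hD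
  have hDR : ((D:ℕ):ℝ) = 2*(p:ℝ)*(q:ℝ) := by rw [hD]; push_cast; ring
  have hirr : Irrational (Real.sqrt D) := by
    apply irr_sqrt
    intro t ht
    rw [hD] at ht; push_cast at ht
    have h2t : (2:ℤ) ∣ t := by
      refine h2Z.dvd_of_dvd_pow (n := 2) ⟨(p:ℤ)*q, by linarith⟩
    obtain ⟨s, rfl⟩ := h2t
    have hpq2 : (p:ℤ)*(q:ℤ) = 2*s^2 := by nlinarith
    rcases h2Z.dvd_mul.mp ⟨s^2, hpq2⟩ with hdd | hdd
    · have : 2 ∣ p := by exact_mod_cast hdd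
      exact hp2 ((Nat.prime_dvd_prime_iff_eq Nat.prime_two hp).mp this).symm
    · have : 2 ∣ q := by exact_mod_cast hdd
      exact hq2 ((Nat.prime_dvd_prime_iff_eq Nat.prime_two hq).mp this).symm
  obtain ⟨h1ε, ⟨hmem, hint, hintinv⟩, huniv⟩ := hε2pq
  have heqD : ε2pq = (x:ℝ) + (y:ℝ) * Real.sqrt (D:ℝ) := by rw [heq, hDR]
  -- Pell equation
  have hpell : x^2 - 2*(p:ℤ)*q*y^2 = 1 := by
    rcases norm_unit_eq hirr hy.ne' heqD hintinv with h1 | h1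
    · rw [hD] at h1; push_cast at h1; linarith
    · exfalso
      rw [hD] at h1; push_cast at h1
      have hdvd : (q:ℤ) ∣ x^2 - (-1) := ⟨2*(p:ℤ)*y^2, by linear_combination h1⟩
      exact hnsqneg1q (by simpa using isSquare_of_dvd' hdvd)
  -- x odd
  obtain ⟨k, hk⟩ : ∃ k, x = 2*k+1 := by
    rcases Int.even_or_odd x with ⟨t, hteq⟩ | ⟨t, hteq⟩
    · exfalso
      have : (2:ℤ) ∣ 1 := ⟨2*t^2 - (p:ℤ)*q*y^2, by rw [hteq] at hpell; linarith⟩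
      norm_num at this
    · exact ⟨t, hteq⟩
  have hkpos : 0 < k := by
    rcases lt_trichotomy k 0 with hh | hh | hh
    · exfalso; nlinarith [sq_nonneg y, hp3, hq3]
    · exfalso
      have : 2*(p:ℤ)*q*y^2 = 0 := by rw [hh] at hk; rw [hk] at hpell; linarith
      have hy2 : y^2 = 0 := by
        have hpq0 : (0:ℤ) < 2*(p:ℤ)*q := by positivity
        nlinarith [sq_nonneg y]
      nlinarith
    · exact hh
  -- y even
  obtain ⟨y', hy'⟩ : ∃ y', y = 2*y' := by
    obtain ⟨u, hu⟩ := Int.even_mul_succ_self k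
    have h2d : (2:ℤ) ∣ (p:ℤ)*((q:ℤ)*y^2) := ⟨2*u, by nlinarith⟩
    rcases h2Z.dvd_mul.mp h2d with hdd | hdd
    · exact absurd (by exact_mod_cast hdd)
        (fun hh => hp2 ((Nat.prime_dvd_prime_iff_eq Nat.prime_two hp).mp hh).symm)
    rcases h2Z.dvd_mul.mp hdd with hdd' | hdd'
    · exact absurd (by exact_mod_cast hdd')
        (fun hh => hq2 ((Nat.prime_dvd_prime_iff_eq Nat.prime_two hq).mp hh).symm)
    · exact h2Z.dvd_of_dvd_pow hdd'
  have hy'pos : 0 < y' := by omega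
  have hprod : k*(k+1) = 2*(p:ℤ)*q*y'^2 := by
    have : x^2 - 1 = 2*(p:ℤ)*q*y^2 := by linarith
    rw [hk, hy'] at this; nlinarith
  -- coprimality facts
  have hco2p : IsCoprime (2:ℤ) (p:ℤ) := by
    rw [Int.isCoprime_iff_gcd_eq_one]
    have : Nat.Coprime 2 p := (Nat.coprime_primes Nat.prime_two hp).mpr (Ne.symm hp2)
    exact_mod_cast this
  have hco2q : IsCoprime (2:ℤ) (q:ℤ) := by
    rw [Int.isCoprime_iff_gcd_eq_one]
    have : Nat.Coprime 2 q := (Nat.coprime_primes Nat.prime_two hq).mpr (Ne.symm hq2)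
    exact_mod_cast this
  have hcopq : IsCoprime (p:ℤ) (q:ℤ) := by
    rw [Int.isCoprime_iff_gcd_eq_one]
    have : Nat.Coprime p q := (Nat.coprime_primes hp hq).mpr hpq
    exact_mod_cast this
  -- divisibility of the product
  have h2dvdP : (2:ℤ) ∣ k*(k+1) := ⟨(p:ℤ)*q*y'^2, by linear_combination hprod⟩
  have hpdvdP : (p:ℤ) ∣ k*(k+1) := ⟨2*(q:ℤ)*y'^2, by linear_combination hprod⟩
  have hqdvdP : (q:ℤ) ∣ k*(k+1) := ⟨2*(p:ℤ)*y'^2, by linear_combination hprod⟩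
  -- helper for y' = a*b
  have hyprod : ∀ a b : ℤ, 0 ≤ a → 0 ≤ b → y'^2 = (a*b)^2 → y' = a*b := by
    intro a b ha hb hab
    have h1 : (y' - a*b)*(y' + a*b) = 0 := by linear_combination hab
    rcases mul_eq_zero.mp h1 with hh | hh
    · linarith
    · exfalso; linarith [mul_nonneg ha hb]
  by_cases cp : (p:ℤ) ∣ k
  · by_cases c2 : (2:ℤ) ∣ k
    · by_cases cq : (q:ℤ) ∣ k
      · -- branch G : k = 2pq a², k+1 = b² : descent, contradiction
        exfalso
        have hdk : (2*(p:ℤ))*(q:ℤ) ∣ k := (hco2q.mul_left hcopq).mul_dvd (hco2p.mul_dvd c2 cp) cq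
        obtain ⟨a, b, ha0, hb0, hka, hkb, hyab⟩ :=
          split_factor (y' := y') (by positivity) hdk (one_dvd _) hkpos one_pos
            (by linear_combination hprod)
        have hy'ab := hyprod a b ha0 hb0 hyab
        have hpell' : b^2 - 2*(p:ℤ)*q*a^2 = 1 := by linarith
        have ha1 : 1 ≤ a := by
          rcases ha0.lt_or_eq with hh | hh
          · omega
          · rw [← hh] at hka; norm_num at hka; omega
        have hb1 : 1 ≤ b := by
          rcases hb0.lt_or_eq with hh | hh
          · omega
          · rw [← hh] at hkb; norm_num at hkb; omega
        set η : ℝ := (b:ℝ) + (a:ℝ) * Real.sqrt (D:ℝ) with hηdef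
        have hsqD : Real.sqrt (D:ℝ) ^ 2 = (D:ℝ) := Real.sq_sqrt (by positivity)
        have hDRZ : ((D:ℕ):ℝ) = 2*(p:ℝ)*(q:ℝ) := hDR
        have haR : (1:ℝ) ≤ (a:ℝ) := by exact_mod_cast ha1
        have hbR : (1:ℝ) ≤ (b:ℝ) := by exact_mod_cast hb1
        have hDpos : (0:ℝ) < Real.sqrt (D:ℝ) := Real.sqrt_pos.mpr (by rw [hDR]; positivity)
        have hη1 : 1 < η := by
          have h6 : 0 < (a:ℝ) * Real.sqrt (D:ℝ) := mul_pos (by linarith) hDpos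
          rw [hηdef]; linarith
        have hη2 : η^2 = ε2pq := by
          rw [hηdef, heqD]
          have hxR : (x:ℝ) = (b:ℝ)^2 + 2*(p:ℝ)*(q:ℝ)*(a:ℝ)^2 := by
            have : x = b^2 + 2*(p:ℤ)*q*a^2 := by linarith
            exact_mod_cast this
          have hyR : (y:ℝ) = 2*(a:ℝ)*(b:ℝ) := by
            have h7 : y = 2*(a*b) := by rw [hy', hy'ab]
            have h8 : (y:ℝ) = 2*((a:ℝ)*(b:ℝ)) := by exact_mod_cast h7
            linarith
          linear_combination (-1)*hxR - Real.sqrt (D:ℝ)*hyR + (a:ℝ)^2*hsqD + (a:ℝ)^2*hDR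
        have hmemη : η ∈ adjoin ℚ {Real.sqrt (D:ℝ)} := by
          have hsm : Real.sqrt (D:ℝ) ∈ adjoin ℚ {Real.sqrt (D:ℝ)} :=
            IntermediateField.subset_adjoin ℚ _ (Set.mem_singleton _)
          exact add_mem (intCast_mem _ b) (mul_mem (intCast_mem _ a) hsm)
        have hintη : IsIntegral ℤ η :=
          (isIntegral_int_cast b).add ((isIntegral_int_cast a).mul (isIntegral_sqrt_nat D))
        have hinvη : IsIntegral ℤ η⁻¹ := by
          have hmul1 : η * ((b:ℝ) - (a:ℝ) * Real.sqrt (D:ℝ)) = 1 := by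
            rw [hηdef]
            have hpe : (b:ℝ)^2 - 2*(p:ℝ)*(q:ℝ)*(a:ℝ)^2 = 1 := by exact_mod_cast hpell'
            linear_combination hpe - (a:ℝ)^2*hsqD - (a:ℝ)^2*hDR
          rw [inv_eq_of_mul_eq_one_right hmul1]
          exact (isIntegral_int_cast b).sub ((isIntegral_int_cast a).mul (isIntegral_sqrt_nat D))
        obtain ⟨n, hn | hn⟩ := huniv η ⟨hmemη, hintη, hinvη⟩
        · have hεne : ε2pq ≠ 0 := by linarith
          have : ε2pq ^ (n + n) = ε2pq ^ (1:ℤ) := by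
            rw [zpow_add₀ hεne, zpow_one, ← hn]
            linear_combination hη2
          have := (zpow_right_strictMono₀ h1ε).injective this
          omega
        · have : (0:ℝ) < ε2pq ^ n := zpow_pos (by linarith) n
          rw [hn] at hη1
          linarith
      · -- branch F : k = 2p a², k+1 = q b² : contradiction via (q/p) = -1
        exfalso
        have hdk : (2*(p:ℤ)) ∣ k := hco2p.mul_dvd c2 cp
        have hdk1 : (q:ℤ) ∣ k+1 := (hqZ.dvd_mul.mp hqdvdP).resolve_left cq
        obtain ⟨a, b, ha0, hb0, hka, hkb, -⟩ :=
          split_factor (y' := y') (by positivity) hdk hdk1 hkpos (by positivity)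
            (by linear_combination hprod)
        apply hlegqp
        refine isSquare_of_dvd' (t := (q:ℤ)*b) ⟨2*(q:ℤ)*a^2, ?_⟩
        linear_combination (-(q:ℤ))*hkb + (q:ℤ)*hka
    · by_cases cq : (q:ℤ) ∣ k
      · -- branch E : k = pq a², k+1 = 2 b² : contradiction via (2/p) = -1
        exfalso
        have hdk : ((p:ℤ)*(q:ℤ)) ∣ k := hcopq.mul_dvd cp cq
        have hdk1 : (2:ℤ) ∣ k+1 := (h2Z.dvd_mul.mp h2dvdP).resolve_left c2
        obtain ⟨a, b, ha0, hb0, hka, hkb, -⟩ :=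
          split_factor (y' := y') (by positivity) hdk hdk1 hkpos (by positivity)
            (by linear_combination hprod)
        apply hleg2p
        exact isSquare_of_dvd' (t := 2*b) ⟨2*(q:ℤ)*a^2, by linear_combination (-2)*hkb + 2*hka⟩
      · -- branch H : k = p a², k+1 = 2q b² : the winner
        have hdk1 : (2:ℤ)*(q:ℤ) ∣ k+1 :=
          hco2q.mul_dvd ((h2Z.dvd_mul.mp h2dvdP).resolve_left c2)
            ((hqZ.dvd_mul.mp hqdvdP).resolve_left cq)
        obtain ⟨a, b, ha0, hb0, hka, hkb, hyab⟩ :=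
          split_factor (y' := y') (by positivity) cp hdk1 hkpos (by positivity)
            (by linear_combination hprod)
        have hy'ab := hyprod a b ha0 hb0 hyab
        constructor
        · exact ⟨2*(p:ℤ)*a, by linear_combination 2*(p:ℤ)*hk + 4*(p:ℤ)*hka⟩
        refine ⟨a, 2*b, ?_, by linear_combination (-2)*hkb + 2*hka + (-1)*hk + hk⟩
        -- real computation
        have hsp : Real.sqrt (2*(p:ℝ)) ^ 2 = 2*(p:ℝ) := Real.sq_sqrt (by positivity)
        have hsq' : Real.sqrt ((q:ℝ)) ^ 2 = (q:ℝ) := Real.sq_sqrt (by positivity)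
        have hmulsq : Real.sqrt (2*(p:ℝ)) * Real.sqrt (q:ℝ) = Real.sqrt (2*(p:ℝ)*(q:ℝ)) :=
          (Real.sqrt_mul (by positivity) _).symm
        have hxaR : (x:ℝ) - 1 = 2*(p:ℝ)*(a:ℝ)^2 := by
          have : x - 1 = 2*(p:ℤ)*a^2 := by linear_combination hk + 2*hka
          exact_mod_cast this
        have hxbR : (x:ℝ) + 1 = 4*(q:ℝ)*(b:ℝ)^2 := by
          have : x + 1 = 4*(q:ℤ)*b^2 := by linear_combination hk + 2*hkb
          exact_mod_cast this
        have hyR : (y:ℝ) = 2*(a:ℝ)*(b:ℝ) := by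
          have h7 : y = 2*(a*b) := by rw [hy', hy'ab]
          have h8 : (y:ℝ) = 2*((a:ℝ)*(b:ℝ)) := by exact_mod_cast h7
          linarith
        rw [heq]
        push_cast
        linear_combination hxaR + hxbR + (2*Real.sqrt (2*(p:ℝ)*(q:ℝ)))*hyR -
          (a:ℝ)^2*hsp - 4*(b:ℝ)^2*hsq' - 4*(a:ℝ)*(b:ℝ)*hmulsq
  · by_cases c2 : (2:ℤ) ∣ k
    · by_cases cq : (q:ℤ) ∣ k
      · -- branch D : k = 2q a², k+1 = p b² : contradiction via (p/q) = -1
        exfalso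
        have hdk : (2*(q:ℤ)) ∣ k := hco2q.mul_dvd c2 cq
        have hdk1 : (p:ℤ) ∣ k+1 := (hpZ.dvd_mul.mp hpdvdP).resolve_left cp
        obtain ⟨a, b, ha0, hb0, hka, hkb, -⟩ :=
          split_factor (y' := y') (by positivity) hdk hdk1 hkpos (by positivity)
            (by linear_combination hprod)
        apply hlegpq
        refine isSquare_of_dvd' (t := (p:ℤ)*b) ⟨2*(p:ℤ)*a^2, ?_⟩
        linear_combination (-(p:ℤ))*hkb + (p:ℤ)*hka
      · -- branch B : k = 2 a², k+1 = pq b² : contradiction via (-2/p) = -1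
        exfalso
        have hdk1 : ((p:ℤ)*(q:ℤ)) ∣ k+1 :=
          hcopq.mul_dvd ((hpZ.dvd_mul.mp hpdvdP).resolve_left cp)
            ((hqZ.dvd_mul.mp hqdvdP).resolve_left cq)
        obtain ⟨a, b, ha0, hb0, hka, hkb, -⟩ :=
          split_factor (y' := y') (by norm_num) c2 hdk1 hkpos (by positivity)
            (by linear_combination hprod)
        have hS : IsSquare ((-2 : ℤ) : ZMod p) :=
          isSquare_of_dvd' (t := 2*a) ⟨2*(q:ℤ)*b^2, by linear_combination 2*hkb - 2*hka⟩
        apply hleg2p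
        have := hsqneg1p.mul hS
        have heq2 : (-1 : ZMod p) * ((-2 : ℤ) : ZMod p) = ((2:ℤ) : ZMod p) := by push_cast; ring
        rwa [heq2] at this
    · by_cases cq : (q:ℤ) ∣ k
      · -- branch C : k = q a², k+1 = 2p b² : contradiction via (2p/q) = -1
        exfalso
        have hdk1 : (2*(p:ℤ)) ∣ k+1 :=
          hco2p.mul_dvd ((h2Z.dvd_mul.mp h2dvdP).resolve_left c2)
            ((hpZ.dvd_mul.mp hpdvdP).resolve_left cp)
        obtain ⟨a, b, ha0, hb0, hka, hkb, -⟩ :=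
          split_factor (y' := y') (by positivity) cq hdk1 hkpos (by positivity)
            (by linear_combination hprod)
        have hS : IsSquare ((2*(p:ℤ) : ℤ) : ZMod q) := by
          refine isSquare_of_dvd' (t := 2*(p:ℤ)*b) ⟨2*(p:ℤ)*a^2, ?_⟩
          linear_combination (-2*(p:ℤ))*hkb + 2*(p:ℤ)*hka
        apply hlegpq
        have hinv := (isSquare_inv' hsq2q).mul hS
        have heq2 : (((2:ℤ) : ZMod q))⁻¹ * ((2*(p:ℤ) : ℤ) : ZMod q) = ((p:ℤ) : ZMod q) := by
          push_cast
          push_cast at h2q0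
          field_simp
        rwa [heq2] at hinv
      · -- branch A : k = a², k+1 = 2pq b² : contradiction via -1 mod q
        exfalso
        have hdk1 : ((2*(p:ℤ))*(q:ℤ)) ∣ k+1 :=
          (hco2q.mul_left hcopq).mul_dvd
            (hco2p.mul_dvd ((h2Z.dvd_mul.mp h2dvdP).resolve_left c2)
              ((hpZ.dvd_mul.mp hpdvdP).resolve_left cp))
            ((hqZ.dvd_mul.mp hqdvdP).resolve_left cq)
        obtain ⟨a, b, ha0, hb0, hka, hkb, -⟩ :=
          split_factor (y' := y') one_pos (one_dvd k) hdk1 hkpos (by positivity)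
            (by linear_combination hprod)
        apply hnsqneg1q
        have : IsSquare ((-1 : ℤ) : ZMod q) :=
          isSquare_of_dvd' (t := a) ⟨2*(p:ℤ)*b^2, by linear_combination hkb - hka⟩
        simpa using this
end
end

section
/- Let q be a prime with q ≡ 7 (mod 8), and write the fundamental unit of Q(√(2q)) as ε_2q = c + d√(2q) with positive integers c, d. Then c + 1 is a perfect square, and there exist integers d₁, d₂ such that 2·ε_2q = (d₁ + d₂√(2q))² in Q(√(2q)) and d₁² - 2q·d₂² = 2. -/
noncomputable section

open IntermediateField

open Polynomial in
lemma quad_coeff_int (x : ℝ) (hx : IsIntegral ℤ x) (hirr : Irrational x) (b c : ℚ)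
    (hroot : x ^ 2 + (b : ℝ) * x + (c : ℝ) = 0) :
    (∃ b' : ℤ, (b' : ℚ) = b) ∧ ∃ c' : ℤ, (c' : ℚ) = c := by
  have hxQ : IsIntegral ℚ x := hx.tower_top
  set p : ℚ[X] := X ^ 2 + (C b * X + C c) with hp
  have hpmonic : p.Monic := monic_X_pow_add degree_linear_lt
  have hpdeg : p.natDegree = 2 := by
    have := natDegree_quadratic (a := (1:ℚ)) (b := b) (c := c) one_ne_zero
    simpa [hp, add_assoc] using this
  have hproot : aeval x p = 0 := by
    simp only [hp, map_add, map_mul, map_pow, aeval_X, aeval_C, eq_ratCast]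
    rw [← hroot]; ring
  have hdvd : minpoly ℚ x ∣ p := minpoly.dvd ℚ x hproot
  have hmin2 : 2 ≤ (minpoly ℚ x).natDegree := by
    rw [minpoly.two_le_natDegree_iff hxQ]
    rintro ⟨y, rfl⟩
    exact hirr ⟨y, (eq_ratCast (algebraMap ℚ ℝ) y).symm⟩
  have hpne : p ≠ 0 := hpmonic.ne_zero
  have hdegeq : (minpoly ℚ x).natDegree = 2 :=
    le_antisymm (Polynomial.natDegree_le_of_dvd hdvd hpne |>.trans_eq hpdeg) hmin2
  have hminmonic : (minpoly ℚ x).Monic := minpoly.monic hxQ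
  obtain ⟨r, hr⟩ := hdvd
  have hrunit : r = 1 := by
    have hrne : r ≠ 0 := by rintro rfl; simp at hr; exact hpne hr
    have hdeg : p.natDegree = (minpoly ℚ x).natDegree + r.natDegree :=
      hr ▸ Polynomial.natDegree_mul (minpoly.ne_zero hxQ) hrne
    have hr0 : r.natDegree = 0 := by omega
    have hrmonic : r.Monic := by
      have := hpmonic
      rw [hr] at this
      exact hminmonic.of_mul_monic_left this
    exact hrmonic.natDegree_eq_zero.mp hr0
  have hpeq : minpoly ℚ x = p := by rw [hr, hrunit, mul_one]
  have hmap : minpoly ℚ x = (minpoly ℤ x).map (algebraMap ℤ ℚ) :=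
    minpoly.isIntegrallyClosed_eq_field_fractions ℚ ℝ hx
  have hb : ((minpoly ℤ x).coeff 1 : ℚ) = b := by
    have := congrArg (fun f => Polynomial.coeff f 1) (hmap.symm.trans hpeq)
    simpa [hp, Polynomial.coeff_map, coeff_X_pow] using this
  have hc : ((minpoly ℤ x).coeff 0 : ℚ) = c := by
    have := congrArg (fun f => Polynomial.coeff f 0) (hmap.symm.trans hpeq)
    simpa [hp, Polynomial.coeff_map, coeff_X_pow] using this
  exact ⟨⟨_, hb⟩, ⟨_, hc⟩⟩


theorem statement14 (q : ℕ) (hq : q.Prime) (hq8 : q % 8 = 7) (ε2q : ℝ)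
    (hε2q : IsFundUnit (2 * q) ε2q) (c d : ℤ) (hc : 0 < c) (hd : 0 < d)
    (heq : ε2q = (c : ℝ) + (d : ℝ) * Real.sqrt (2 * q)) :
    (∃ s : ℤ, c + 1 = s ^ 2) ∧
    ∃ d₁ d₂ : ℤ, 2 * ε2q = ((d₁ : ℝ) + (d₂ : ℝ) * Real.sqrt (2 * q)) ^ 2 ∧
      d₁ ^ 2 - 2 * (q : ℤ) * d₂ ^ 2 = 2 := by
  haveI : Fact q.Prime := ⟨hq⟩
  have hq7 : 7 ≤ q := by
    rcases Nat.lt_or_ge q 8 with h | h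
    · omega
    · omega
  have hq4 : q % 4 = 3 := by omega
  set r : ℝ := Real.sqrt (2 * q) with hrdef
  have hrnn : (0:ℝ) ≤ 2 * (q:ℝ) := by positivity
  have hr2 : r ^ 2 = 2 * (q:ℝ) := Real.sq_sqrt hrnn
  have hrpos : 0 < r := Real.sqrt_pos.mpr (by positivity)
  have hcast : ((2 * q : ℕ) : ℝ) = 2 * (q:ℝ) := by push_cast; ring
  have hirr_r : Irrational r := by
    rw [hrdef, ← hcast]
    rw [irrational_sqrt_natCast_iff]
    rintro ⟨k, hk⟩
    have hqk : q ∣ k := by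
      have : q ∣ k * k := ⟨2, by omega⟩
      exact hq.dvd_of_dvd_pow (n := 2) (by rwa [sq])
    obtain ⟨m, rfl⟩ := hqk
    have h2 : q * 2 = q * (q * m * m) := by rw [Nat.mul_comm q 2, hk]; ring
    have h3 : 2 = q * m * m := Nat.eq_of_mul_eq_mul_left (by omega) h2
    have h4 : q ∣ 2 := ⟨m * m, by rw [← Nat.mul_assoc]; omega⟩
    have := Nat.le_of_dvd (by norm_num) h4
    omega
  obtain ⟨hε1, ⟨hεK, hεint, hεinv⟩, hfund⟩ := hε2q
  have hεpos : 0 < ε2q := lt_trans one_pos hε1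
  have hεne : ε2q ≠ 0 := ne_of_gt hεpos
  -- the key quadratic equation for ε
  set N : ℤ := c ^ 2 - 2 * q * d ^ 2 with hNdef
  have hkey : ε2q ^ 2 - 2 * (c:ℝ) * ε2q + (N:ℝ) = 0 := by
    rw [heq, hNdef]; push_cast
    linear_combination ((d:ℝ))^2 * hr2
  -- irrationality of ε and ε⁻¹
  have hirr_ε : Irrational ε2q := by
    rw [heq, hrdef]
    exact ((hirr_r.intCast_mul hd.ne').intCast_add c)
  have hirr_inv : Irrational ε2q⁻¹ := hirr_ε.inv
  -- N ≠ 0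
  have hN0 : (N:ℝ) ≠ 0 := by
    intro h
    have h2 : (ε2q - 2 * (c:ℝ)) * ε2q = 0 := by linear_combination hkey - h
    rcases mul_eq_zero.mp h2 with h1 | h1
    · have hε2c : ε2q = ((2 * c : ℤ) : ℝ) := by push_cast; linarith
      exact (hirr_ε) ⟨((2*c : ℤ) : ℚ), by rw [hε2c]; push_cast; ring⟩
    · exact hεne h1
  have hNz : N ≠ 0 := fun h => hN0 (by exact_mod_cast congrArg (Int.cast : ℤ → ℝ) h)
  -- ε⁻¹ satisfies x² + (-2c/N) x + 1/N = 0
  have hroot : ε2q⁻¹ ^ 2 + ((- (2*c) / N : ℚ) : ℝ) * ε2q⁻¹ + ((1 / N : ℚ):ℝ) = 0 := by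
    have hinv : ε2q⁻¹ * ε2q = 1 := inv_mul_cancel₀ hεne
    have hNinv : (N:ℝ) * (N:ℝ)⁻¹ = 1 := mul_inv_cancel₀ hN0
    push_cast
    linear_combination (ε2q⁻¹^2/(N:ℝ)) * hkey + ((2*(c:ℝ)/(N:ℝ)) * ε2q⁻¹ - (ε2q⁻¹*ε2q + 1)/(N:ℝ)) * hinv - ε2q⁻¹^2 * hNinv
  obtain ⟨-, ⟨m, hm⟩⟩ := quad_coeff_int ε2q⁻¹ hεinv hirr_inv _ _ hroot
  have hNm : N * m = 1 := by
    have : ((N * m : ℤ) : ℚ) = 1 := by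
      push_cast
      rw [hm]
      field_simp
    exact_mod_cast this
  have hN1 : N = 1 ∨ N = -1 := Int.isUnit_iff.mp (IsUnit.of_mul_eq_one _ hNm)
  have hnorm : c ^ 2 - 2 * (q:ℤ) * d ^ 2 = 1 := by
    rcases hN1 with h | h
    · exact h
    · exfalso
      rw [hNdef] at h
      have hmod : ((c:ZMod q)) ^ 2 = -1 := by
        have h5 := congrArg (fun z : ℤ => (z : ZMod q)) h
        push_cast at h5
        rw [ZMod.natCast_self] at h5
        linear_combination h5
      have : IsSquare (-1 : ZMod q) := ⟨c, by rw [← hmod]; ring⟩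
      exact (ZMod.exists_sq_eq_neg_one_iff.mp this) hq4
  clear hkey hN0 hNz hN1 hirr_inv hεinv
  -- c is odd
  obtain ⟨k, hk⟩ : Odd c := by
    rcases Int.even_or_odd c with ⟨t, ht⟩ | ho
    · exfalso
      rw [ht] at hnorm
      have h21 : (1:ℤ) = 2 * (2*t^2 - q*d^2) := by linear_combination - hnorm
      omega
    · exact ho
  rw [hk] at hnorm heq hc
  -- d is even
  obtain ⟨m, hm8⟩ := Int.even_mul_succ_self k
  have hqd4 : (q:ℤ) * d ^ 2 = 4 * m := by
    have h2 : 2 * ((q:ℤ) * d ^ 2) = 2 * (4 * m) := by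
      linear_combination - hnorm + 4 * hm8
    exact mul_left_cancel₀ two_ne_zero h2
  have h2d : (2:ℤ) ∣ d := by
    have h2dvd : (2:ℤ) ∣ (q:ℤ) * d ^ 2 := ⟨2 * m, by omega⟩
    rcases (Int.prime_two.dvd_mul.mp h2dvd) with h | h
    · exfalso; omega
    · exact Int.prime_two.dvd_of_dvd_pow h
  obtain ⟨e, he⟩ := h2d
  rw [he] at hnorm hd heq
  have hepos : 0 < e := by omega
  have hkpos : 0 ≤ k := by omega
  -- the key factorization
  have hAB : (k + 1) * k = 2 * (q:ℤ) * e ^ 2 := by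
    have h4 : 4 * ((k + 1) * k) = 4 * (2 * (q:ℤ) * e ^ 2) := by linear_combination hnorm
    exact mul_left_cancel₀ (by norm_num) h4
  have hqZ : Prime ((q:ℕ):ℤ) := Nat.prime_iff_prime_int.mp hq
  have h2q0 : (2 * (q:ℤ)) ≠ 0 := by positivity
  have hk1 : 1 ≤ k := by
    rcases lt_or_eq_of_le hkpos with h | h
    · omega
    · exfalso
      have : (0:ℤ) < 2 * (q:ℤ) * e ^ 2 := by positivity
      rw [← h] at hAB
      simp at hAB
      omega
  have hcop : IsCoprime (k + 1 : ℤ) k := ⟨1, -1, by ring⟩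
  have hqdvd : ((q:ℕ):ℤ) ∣ (k + 1) * k := ⟨2 * e ^ 2, by linear_combination hAB⟩
  have h2dvd : (2:ℤ) ∣ (k + 1) * k := ⟨(q:ℤ) * e ^ 2, by linear_combination hAB⟩
  have hq2 : ¬ ((2:ℤ) ∣ ((q:ℕ):ℤ)) := by omega
  rcases hqZ.dvd_mul.mp hqdvd with hqA | hqB <;>
    rcases Int.prime_two.dvd_mul.mp h2dvd with h2A | h2B
  · -- q ∣ k+1 and 2 ∣ k+1 : contradiction via -1 square mod q
    exfalso
    obtain ⟨a, ha⟩ := hqA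
    have h2a : (2:ℤ) ∣ a := by
      rcases Int.prime_two.dvd_mul.mp (ha ▸ h2A) with h | h
      · exact absurd h hq2
      · exact h
    obtain ⟨t, rfl⟩ := h2a
    have hcan : (2 * (q:ℤ)) * (t * k) = (2 * (q:ℤ)) * e ^ 2 := by
      linear_combination hAB - k * ha
    have htk : k * t = e ^ 2 := by
      have := mul_left_cancel₀ h2q0 hcan; linarith [this]
    have hcopkt : IsCoprime (k:ℤ) t :=
      (hcop.symm.of_isCoprime_of_dvd_right ⟨2 * q, by linarith [ha]⟩)
    obtain ⟨v, hv⟩ := Int.sq_of_isCoprime hcopkt htk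
    have hkv : k = v ^ 2 := by
      rcases hv with h | h
      · exact h
      · nlinarith [sq_nonneg v]
    have hvq : v ^ 2 + 1 = (q:ℤ) * (2 * t) := by linear_combination hkv.symm + ha
    have hmod : ((v:ZMod q)) * v = -1 := by
      have h5 := congrArg (fun z : ℤ => (z : ZMod q)) hvq
      push_cast at h5
      rw [ZMod.natCast_self] at h5
      linear_combination h5
    exact (ZMod.exists_sq_eq_neg_one_iff.mp ⟨v, hmod.symm⟩) hq4
  · -- q ∣ k+1 and 2 ∣ k : contradiction via -2 square mod q
    exfalso
    obtain ⟨a, ha⟩ := hqA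
    obtain ⟨b, hb⟩ := h2B
    have hcan : (2 * (q:ℤ)) * (a * b) = (2 * (q:ℤ)) * e ^ 2 := by
      linear_combination hAB - k * ha - (q:ℤ) * a * hb
    have hab : a * b = e ^ 2 := mul_left_cancel₀ h2q0 hcan
    have hcopab : IsCoprime (a:ℤ) b :=
      IsCoprime.of_isCoprime_of_dvd_right
        (IsCoprime.of_isCoprime_of_dvd_left hcop ⟨(q:ℤ), by linarith [ha]⟩)
        ⟨2, by linarith [hb]⟩
    obtain ⟨u, hu⟩ := Int.sq_of_isCoprime hcopab hab
    obtain ⟨v, hv⟩ := Int.sq_of_isCoprime hcopab.symm (by linarith [hab] : b * a = e ^ 2)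
    have hapos : 0 < a := by
      by_contra hcon
      push_neg at hcon
      have hq0 : (0:ℤ) ≤ (q:ℤ) := by positivity
      have := mul_nonpos_of_nonneg_of_nonpos hq0 hcon
      linarith only [ha, hk1, this]
    have hbpos : 0 < b := by omega
    have hau : a = u ^ 2 := by
      rcases hu with h | h
      · exact h
      · linarith only [sq_nonneg u, h, hapos]
    have hbv : b = v ^ 2 := by
      rcases hv with h | h
      · exact h
      · linarith only [sq_nonneg v, h, hbpos]
    -- q u² - 2 v² = 1
    have hqu : (q:ℤ) * u ^ 2 - 2 * v ^ 2 = 1 := by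
      rw [← hau, ← hbv]; linarith only [ha, hb]
    -- (2v)² = -2 mod q
    have hv2 : (((2 * v : ℤ)) : ZMod q) ^ 2 = -2 := by
      have hint : (2 * v : ℤ) ^ 2 = -2 + (q:ℤ) * (2 * u ^ 2) := by linear_combination -2 * hqu
      have h5 := congrArg (fun z : ℤ => (z : ZMod q)) hint
      push_cast at h5
      rw [ZMod.natCast_self] at h5
      push_cast
      linear_combination h5
    obtain ⟨x, hx⟩ : IsSquare (2 : ZMod q) :=
      (ZMod.exists_sq_eq_two_iff (by omega)).mpr (Or.inr hq8)
    have h2ne : (2 : ZMod q) ≠ 0 := by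
      have : ((2:ℕ) : ZMod q) ≠ 0 := by
        rw [Ne, ZMod.natCast_eq_zero_iff]
        intro hdvd
        exact absurd (Nat.le_of_dvd (by norm_num) hdvd) (by omega)
      exact_mod_cast this
    have hxne : x ≠ 0 := by
      intro h0
      rw [h0, mul_zero] at hx
      exact h2ne hx
    have hsq : ((((2 * v : ℤ)) : ZMod q) * x⁻¹) ^ 2 = -1 := by
      rw [mul_pow, hv2, sq, ← mul_inv, ← hx]
      field_simp
    exact (ZMod.exists_sq_eq_neg_one_iff.mp
      ⟨(((2 * v : ℤ)) : ZMod q) * x⁻¹, by rw [← hsq]; ring⟩) hq4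
  · -- q ∣ k and 2 ∣ k+1 : the good case
    obtain ⟨b, hb⟩ := hqB
    obtain ⟨a, ha⟩ := h2A
    have hcan : (2 * (q:ℤ)) * (a * b) = (2 * (q:ℤ)) * e ^ 2 := by
      linear_combination hAB - k * ha - 2 * a * hb
    have hab : a * b = e ^ 2 := mul_left_cancel₀ h2q0 hcan
    have hcopab : IsCoprime (a:ℤ) b :=
      IsCoprime.of_isCoprime_of_dvd_right
        (IsCoprime.of_isCoprime_of_dvd_left hcop ⟨2, by linarith [ha]⟩)
        ⟨(q:ℤ), by linarith [hb]⟩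
    obtain ⟨u, hu⟩ := Int.sq_of_isCoprime hcopab hab
    obtain ⟨v, hv⟩ := Int.sq_of_isCoprime hcopab.symm (by linarith [hab] : b * a = e ^ 2)
    have hapos : 0 < a := by omega
    have hbpos : 0 < b := by
      by_contra hcon
      push_neg at hcon
      have hq0 : (0:ℤ) ≤ (q:ℤ) := by positivity
      have := mul_nonpos_of_nonneg_of_nonpos hq0 hcon
      linarith only [hb, hk1, this]
    have hau : a = u ^ 2 := by
      rcases hu with h | h
      · exact h
      · linarith only [sq_nonneg u, h, hapos]
    have hbv : b = v ^ 2 := by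
      rcases hv with h | h
      · exact h
      · linarith only [sq_nonneg v, h, hbpos]
    set U : ℤ := |u| with hU
    set V : ℤ := |v| with hV
    have hU2 : U ^ 2 = u ^ 2 := sq_abs u
    have hV2 : V ^ 2 = v ^ 2 := sq_abs v
    have hUpos : 0 ≤ U := abs_nonneg u
    have hVpos : 0 ≤ V := abs_nonneg v
    have heUV : e = U * V := by
      have h0 : (e - U * V) * (e + U * V) = 0 := by
        have : (U * V) ^ 2 = e ^ 2 := by
          rw [mul_pow, hU2, hV2, ← hau, ← hbv]; exact hab
        linear_combination - this
      rcases mul_eq_zero.mp h0 with h | h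
      · linarith only [h, hepos]
      · linarith only [h, hepos, mul_nonneg hUpos hVpos]
    refine ⟨⟨2 * U, by linear_combination hk + 2 * ha + 4 * hau - 4 * hU2⟩, 2 * U, V, ?_, ?_⟩
    · -- 2ε = (2U + V√(2q))²
      have hA : (2:ℤ) * (2 * k + 1) = (2 * U) ^ 2 + 2 * (q:ℤ) * V ^ 2 := by
        have hqt : (q:ℤ) * V ^ 2 = k := by rw [hV2, ← hbv]; linarith only [hb]
        linear_combination 2 * ha + 4 * hau - 4 * hU2 - 2 * hqt
      have hB : (2 * e : ℤ) = (2 * U) * V := by rw [heUV]; ring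
      have hA' : (2:ℝ) * (2 * (k:ℝ) + 1) = (2 * (U:ℝ)) ^ 2 + 2 * (q:ℝ) * (V:ℝ) ^ 2 := by
        exact_mod_cast congrArg (Int.cast : ℤ → ℝ) hA
      have hB' : (2 * (e:ℝ)) = (2 * (U:ℝ)) * (V:ℝ) := by
        exact_mod_cast congrArg (Int.cast : ℤ → ℝ) hB
      rw [heq]
      push_cast
      linear_combination hA' + 2 * r * hB' - (V:ℝ) ^ 2 * hr2
    · -- norm 2
      have h1 : (2 * U) ^ 2 = 2 * (k + 1) := by
        linear_combination -2 * ha - 4 * hau + 4 * hU2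
      have h2 : 2 * (q:ℤ) * V ^ 2 = 2 * k := by rw [hV2, ← hbv]; linarith only [hb]
      linarith only [h1, h2]
  · -- q ∣ k and 2 ∣ k : descent contradiction
    exfalso
    obtain ⟨b, hb⟩ := hqB
    have h2b : (2:ℤ) ∣ b := by
      rcases Int.prime_two.dvd_mul.mp (hb ▸ h2B) with h | h
      · exact absurd h hq2
      · exact h
    obtain ⟨t, rfl⟩ := h2b
    have hcan : (2 * (q:ℤ)) * ((k + 1) * t) = (2 * (q:ℤ)) * e ^ 2 := by
      linear_combination hAB - (k + 1) * hb
    have htk : (k + 1) * t = e ^ 2 := mul_left_cancel₀ h2q0 hcan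
    have hcopkt : IsCoprime (k + 1 : ℤ) t :=
      hcop.of_isCoprime_of_dvd_right ⟨2 * q, by linarith [hb]⟩
    obtain ⟨u, hu⟩ := Int.sq_of_isCoprime hcopkt htk
    obtain ⟨w, hw⟩ := Int.sq_of_isCoprime hcopkt.symm (by linarith [htk] : t * (k + 1) = e ^ 2)
    have htpos : 0 < t := by
      by_contra hcon
      push_neg at hcon
      have hq0 : (0:ℤ) ≤ 2 * (q:ℤ) := by positivity
      have := mul_nonpos_of_nonneg_of_nonpos hq0 hcon
      have hb' : k = 2 * (q:ℤ) * t := by linarith [hb]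
      linarith only [hk1, hb', this]
    have hku : k + 1 = u ^ 2 := by
      rcases hu with h | h
      · exact h
      · linarith only [sq_nonneg u, h, hk1]
    have htw : t = w ^ 2 := by
      rcases hw with h | h
      · exact h
      · linarith only [sq_nonneg w, h, htpos]
    set U : ℤ := |u| with hUd
    set W : ℤ := |w| with hWd
    have hU2 : U ^ 2 = k + 1 := by rw [sq_abs, ← hku]
    have hW2 : 2 * (q:ℤ) * W ^ 2 = k := by rw [sq_abs, ← htw]; linarith only [hb]
    have hUnn : 0 ≤ U := abs_nonneg u
    have hWnn : 0 ≤ W := abs_nonneg w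
    have hU1 : 1 ≤ U := by
      by_contra hcon
      push_neg at hcon
      have hU0 : U = 0 := by omega
      rw [hU0] at hU2
      omega
    have heUW : e = U * W := by
      have h0 : (e - U * W) * (e + U * W) = 0 := by
        have : (U * W) ^ 2 = e ^ 2 := by
          have h5 : U ^ 2 * (W ^ 2) = e ^ 2 := by
            rw [sq_abs, sq_abs, ← hku, ← htw]; exact htk
          linear_combination h5
        linear_combination - this
      rcases mul_eq_zero.mp h0 with h | h
      · linarith only [h, hepos]
      · linarith only [h, hepos, mul_nonneg hUnn hWnn]
    set η : ℝ := (U:ℝ) + (W:ℝ) * r with hηd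
    have hU2' : ((U:ℝ)) ^ 2 = (k:ℝ) + 1 := by exact_mod_cast congrArg (Int.cast : ℤ → ℝ) hU2
    have hW2' : 2 * (q:ℝ) * ((W:ℝ)) ^ 2 = (k:ℝ) := by
      exact_mod_cast congrArg (Int.cast : ℤ → ℝ) hW2
    have heUW' : (e:ℝ) = (U:ℝ) * (W:ℝ) := by exact_mod_cast congrArg (Int.cast : ℤ → ℝ) heUW
    have hη2 : η ^ 2 = ε2q := by
      rw [heq, hηd]
      push_cast
      linear_combination hU2' + hW2' + (W:ℝ) ^ 2 * hr2 - 2 * r * heUW'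
    have hη0 : η ^ 2 - 2 * (U:ℝ) * η + 1 = 0 := by
      rw [hηd]
      linear_combination (-1 : ℝ) * hU2' + hW2' + (W:ℝ) ^ 2 * hr2
    have hηpos : 0 < η := by
      rw [hηd]
      have h6 : (1:ℝ) ≤ (U:ℝ) := by exact_mod_cast hU1
      have h7 := mul_nonneg (by exact_mod_cast hWnn : (0:ℝ) ≤ (W:ℝ)) hrpos.le
      linarith only [h6, h7]
    have hηinv : η⁻¹ = 2 * (U:ℝ) - η := by
      apply inv_eq_of_mul_eq_one_right
      linear_combination - hη0
    -- η is a unit of the ring of integers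
    have hrK : r ∈ adjoin ℚ {Real.sqrt ((2 * q : ℕ):ℝ)} := by
      rw [hcast]
      exact subset_adjoin ℚ _ (Set.mem_singleton _)
    have hηK : η ∈ adjoin ℚ {Real.sqrt ((2 * q : ℕ):ℝ)} := by
      rw [hηd]
      exact add_mem (intCast_mem _ U) (mul_mem (intCast_mem _ W) hrK)
    have hpoly : IsIntegral ℤ η := by
      refine ⟨Polynomial.X ^ 2 + (Polynomial.C (-(2 * U)) * Polynomial.X + Polynomial.C 1),
        Polynomial.monic_X_pow_add Polynomial.degree_linear_lt, ?_⟩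
      rw [← Polynomial.aeval_def]
      simp only [map_add, map_mul, map_pow, map_neg, map_one, map_ofNat, map_intCast,
        Polynomial.aeval_X, Polynomial.aeval_C, eq_intCast]
      push_cast
      linear_combination hη0
    have hpolyinv : IsIntegral ℤ η⁻¹ := by
      rw [hηinv]
      have h1 : IsIntegral ℤ ((2 * (U:ℝ))) := by
        simpa using isIntegral_algebraMap (R := ℤ) (A := ℝ) (x := (2 * U : ℤ))
      exact h1.sub hpoly
    obtain ⟨n, hn⟩ := hfund η ⟨hηK, hpoly, hpolyinv⟩
    rcases hn with hn | hn
    · have h2n : ε2q ^ (2 * n) = ε2q ^ (1:ℤ) := by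
        rw [zpow_one]
        calc ε2q ^ (2 * n) = ε2q ^ n * ε2q ^ n := by rw [two_mul, zpow_add₀ hεne]
        _ = η * η := by rw [hn]
        _ = ε2q := by rw [← hη2]; ring
      have := (zpow_right_strictMono₀ hε1).injective h2n
      omega
    · have : (0:ℝ) < ε2q ^ n := zpow_pos hεpos n
      rw [hn] at hηpos
      linarith only [this, hηpos]
end
end

section
/- Let q be a prime with q ≡ 7 (mod 8), and write the fundamental unit of Q(√q) as ε_q = c' + d'√q with positive integers c', d'. Then c' + 1 is a perfect square, and there exist integers d₁', d₂' such that 2·ε_q = (d₁' + d₂'√q)² in Q(√q) and d₁'² - q·d₂'² = 2. -/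
noncomputable section

open IntermediateField Polynomial

private lemma int_sq_mod_four (a : ℤ) : a ^ 2 % 4 = 0 ∨ a ^ 2 % 4 = 1 := by
  rcases Int.even_or_odd a with ⟨k, hk⟩ | ⟨k, hk⟩
  · left; have : a ^ 2 = 4 * k ^ 2 := by rw [hk]; ring
    omega
  · right; have : a ^ 2 = 4 * (k ^ 2 + k) + 1 := by rw [hk]; ring
    omega

private lemma int_odd_sq_mod_eight (a : ℤ) (ha : ¬ (2 ∣ a)) : a ^ 2 % 8 = 1 := by
  rcases Int.even_or_odd a with ⟨k, hk⟩ | ⟨k, hk⟩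
  · exact absurd ⟨k, by omega⟩ ha
  · obtain ⟨m, hm⟩ := Int.even_mul_succ_self k
    have h2 : a ^ 2 = 4 * (k * (k + 1)) + 1 := by rw [hk]; ring
    have h3 : a ^ 2 = 8 * m + 1 := by rw [h2]; omega
    omega

private lemma one_le_of_mul (Q t v : ℤ) (hq : 1 ≤ Q) (hv : 1 ≤ v) (h : v = Q * t) : 1 ≤ t := by
  rcases le_or_gt 1 t with h1 | h1
  · exact h1
  · exfalso
    have ht0 : t ≤ 0 := by omega
    nlinarith

/-- The key integer arithmetic. -/
private lemma key_arith (q : ℕ) (hq : q.Prime) (hq8 : q % 8 = 7) (c d : ℤ)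
    (hc : 0 < c) (hd : 0 < d) (hN : c ^ 2 - (q : ℤ) * d ^ 2 = 1) :
    (∃ a b : ℤ, 0 ≤ a ∧ 0 ≤ b ∧ c + 1 = a ^ 2 ∧ c - 1 = q * b ^ 2 ∧ d = a * b) ∨
    (∃ a b : ℤ, 0 ≤ a ∧ 0 ≤ b ∧ c + 1 = 2 * a ^ 2 ∧ c - 1 = 2 * q * b ^ 2 ∧
      d = 2 * (a * b) ∧ a ^ 2 - q * b ^ 2 = 1) := by
  have hqZ : Prime (q : ℤ) := Nat.prime_iff_prime_int.mp hq
  have hq8' : (q : ℤ) % 8 = 7 := by omega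
  have hq1 : (1 : ℤ) ≤ (q : ℤ) := by omega
  have hq0 : (q : ℤ) ≠ 0 := by omega
  have heq2 : (c - 1) * (c + 1) = (q : ℤ) * d ^ 2 := by linear_combination hN
  have hcne1 : c ≠ 1 := by
    rintro rfl
    have h0 : (q : ℤ) * d ^ 2 = 0 := by linarith
    have := mul_eq_zero.mp h0
    have hd2 : d ^ 2 ≠ 0 := pow_ne_zero _ (by omega)
    tauto
  have hc2 : 2 ≤ c := by omega
  rcases Int.even_or_odd c with ⟨x, hx⟩ | ⟨x, hx⟩
  · -- c even : left disjunct or mod-8 contradiction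
    have hcop : IsCoprime (c - 1) (c + 1) := by
      rw [Int.isCoprime_iff_gcd_eq_one]
      have h1 : ((Int.gcd (c - 1) (c + 1) : ℕ) : ℤ) ∣ c - 1 := Int.gcd_dvd_left _ _
      have h2 : ((Int.gcd (c - 1) (c + 1) : ℕ) : ℤ) ∣ c + 1 := Int.gcd_dvd_right _ _
      have h3 : ((Int.gcd (c - 1) (c + 1) : ℕ) : ℤ) ∣ (2 : ℤ) := by
        have := dvd_sub h2 h1
        simpa using this
      have h3n : Int.gcd (c - 1) (c + 1) ∣ 2 := by exact_mod_cast h3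
      rcases (Nat.dvd_prime Nat.prime_two).mp h3n with h | h
      · exact h
      · exfalso
        rw [h] at h1
        obtain ⟨k, hk⟩ := h1
        omega
    have hqdvd : (q : ℤ) ∣ (c - 1) * (c + 1) := ⟨d ^ 2, heq2⟩
    rcases (hqZ.dvd_mul).mp hqdvd with hdl | hdr
    · -- q ∣ c - 1 : good case
      obtain ⟨t, ht⟩ := hdl
      have hcancel : (c + 1) * t = d ^ 2 := by
        have h5 : (q : ℤ) * ((c + 1) * t) = (q : ℤ) * d ^ 2 := by
          linear_combination heq2 - (c + 1) * ht
        exact mul_left_cancel₀ hq0 h5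
      have ht1 : 1 ≤ t := one_le_of_mul _ t (c - 1) hq1 (by omega) ht
      have hcopt : IsCoprime (c + 1) t :=
        hcop.symm.of_isCoprime_of_dvd_right ⟨q, by linarith [ht]⟩
      obtain ⟨a, ha⟩ := Int.sq_of_isCoprime hcopt hcancel
      obtain ⟨b, hb⟩ := Int.sq_of_isCoprime hcopt.symm
        (show t * (c + 1) = d ^ 2 by linear_combination hcancel)
      have ha' : c + 1 = a ^ 2 := by
        rcases ha with h | h
        · exact h
        · exfalso; linarith [sq_nonneg a]
      have hb' : t = b ^ 2 := by
        rcases hb with h | h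
        · exact h
        · exfalso; linarith [sq_nonneg b]
      left
      refine ⟨|a|, |b|, abs_nonneg a, abs_nonneg b, by rw [sq_abs]; exact ha', ?_, ?_⟩
      · rw [sq_abs, ht, hb']
      · have hd2 : d ^ 2 = (|a| * |b|) ^ 2 := by
          rw [← hcancel, ha', hb', mul_pow, sq_abs, sq_abs]
        have h0 : (d - |a| * |b|) * (d + |a| * |b|) = 0 := by linear_combination hd2
        rcases mul_eq_zero.mp h0 with h | h
        · linarith
        · have : 0 ≤ |a| * |b| := mul_nonneg (abs_nonneg a) (abs_nonneg b)
          linarith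
    · -- q ∣ c + 1 : contradiction mod 8
      exfalso
      obtain ⟨t, ht⟩ := hdr
      have hcancel : (c - 1) * t = d ^ 2 := by
        have h5 : (q : ℤ) * ((c - 1) * t) = (q : ℤ) * d ^ 2 := by
          linear_combination heq2 - (c - 1) * ht
        exact mul_left_cancel₀ hq0 h5
      have ht1 : 1 ≤ t := one_le_of_mul _ t (c + 1) hq1 (by omega) ht
      have hcopt : IsCoprime (c - 1) t :=
        hcop.of_isCoprime_of_dvd_right ⟨q, by linarith [ht]⟩
      obtain ⟨a, ha⟩ := Int.sq_of_isCoprime hcopt hcancel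
      obtain ⟨b, hb⟩ := Int.sq_of_isCoprime hcopt.symm
        (show t * (c - 1) = d ^ 2 by linear_combination hcancel)
      have ha' : c - 1 = a ^ 2 := by
        rcases ha with h | h
        · exact h
        · exfalso; linarith [sq_nonneg a]
      have hb' : t = b ^ 2 := by
        rcases hb with h | h
        · exact h
        · exfalso; linarith [sq_nonneg b]
      have haodd : ¬ (2 ∣ a) := by
        rintro ⟨k, hk⟩
        have : c - 1 = 4 * k ^ 2 := by rw [ha', hk]; ring
        omega
      have hbodd : ¬ (2 ∣ b) := by
        rintro ⟨k, hk⟩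
        have h4 : c + 1 = 4 * ((q : ℤ) * k ^ 2) := by rw [ht, hb', hk]; ring
        omega
      have ha8 := int_odd_sq_mod_eight a haodd
      have hb8 := int_odd_sq_mod_eight b hbodd
      have hqb : ((q : ℤ) * b ^ 2) % 8 = 7 := by
        rw [Int.mul_emod, hq8', hb8]; norm_num
      have hceq : c + 1 = (q : ℤ) * b ^ 2 := by rw [ht, hb']
      generalize a ^ 2 = A at ha8 ha'
      generalize (q : ℤ) * b ^ 2 = B at hqb hceq
      omega
  · -- c odd
    have hx1 : 1 ≤ x := by omega
    have hdeven : 2 ∣ d := by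
      by_contra hdo
      have hd8 := int_odd_sq_mod_eight d hdo
      have hqd : ((q : ℤ) * d ^ 2) % 8 = 7 := by rw [Int.mul_emod, hq8', hd8]; norm_num
      obtain ⟨m, hm⟩ := Int.even_mul_succ_self x
      have h4 : (q : ℤ) * d ^ 2 = 4 * (x * (x + 1)) := by rw [← heq2, hx]; ring
      have h5 : (q : ℤ) * d ^ 2 = 8 * m := by rw [h4]; omega
      omega
    obtain ⟨e, he⟩ := hdeven
    have he1 : 1 ≤ e := by omega
    have heq3 : x * (x + 1) = (q : ℤ) * e ^ 2 := by
      have h4 : (4 : ℤ) * (x * (x + 1)) = 4 * ((q : ℤ) * e ^ 2) := by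
        rw [hx, he] at heq2; linear_combination heq2
      exact mul_left_cancel₀ (by norm_num) h4
    have hcop : IsCoprime x (x + 1) := ⟨-1, 1, by ring⟩
    have hqdvd : (q : ℤ) ∣ x * (x + 1) := ⟨e ^ 2, heq3⟩
    rcases (hqZ.dvd_mul).mp hqdvd with hdl | hdr
    · -- q ∣ x : right disjunct
      obtain ⟨t, ht⟩ := hdl
      have hcancel : (x + 1) * t = e ^ 2 := by
        have h5 : (q : ℤ) * ((x + 1) * t) = (q : ℤ) * e ^ 2 := by
          linear_combination heq3 - (x + 1) * ht
        exact mul_left_cancel₀ hq0 h5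
      have ht1 : 1 ≤ t := one_le_of_mul _ t x hq1 hx1 ht
      have hcopt : IsCoprime (x + 1) t :=
        hcop.symm.of_isCoprime_of_dvd_right ⟨q, by linarith [ht]⟩
      obtain ⟨a, ha⟩ := Int.sq_of_isCoprime hcopt hcancel
      obtain ⟨b, hb⟩ := Int.sq_of_isCoprime hcopt.symm
        (show t * (x + 1) = e ^ 2 by linear_combination hcancel)
      have ha' : x + 1 = a ^ 2 := by
        rcases ha with h | h
        · exact h
        · exfalso; linarith [sq_nonneg a]
      have hb' : t = b ^ 2 := by
        rcases hb with h | h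
        · exact h
        · exfalso; linarith [sq_nonneg b]
      right
      have hqt : (q : ℤ) * b ^ 2 = x := by rw [← hb', ← ht]
      refine ⟨|a|, |b|, abs_nonneg a, abs_nonneg b, ?_, ?_, ?_, ?_⟩
      · rw [sq_abs]; linarith
      · rw [sq_abs]; rw [hx]; linarith
      · have he2 : e ^ 2 = (|a| * |b|) ^ 2 := by
          rw [← hcancel, ha', hb', mul_pow, sq_abs, sq_abs]
        have h0 : (e - |a| * |b|) * (e + |a| * |b|) = 0 := by linear_combination he2
        rcases mul_eq_zero.mp h0 with h | h
        · linarith [he]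
        · have : 0 ≤ |a| * |b| := mul_nonneg (abs_nonneg a) (abs_nonneg b)
          linarith
      · rw [sq_abs, sq_abs]; linarith
    · -- q ∣ x + 1 : contradiction mod 4
      exfalso
      obtain ⟨t, ht⟩ := hdr
      have hcancel : x * t = e ^ 2 := by
        have h5 : (q : ℤ) * (x * t) = (q : ℤ) * e ^ 2 := by
          linear_combination heq3 - x * ht
        exact mul_left_cancel₀ hq0 h5
      have ht1 : 1 ≤ t := one_le_of_mul _ t (x + 1) hq1 (by omega) ht
      have hcopt : IsCoprime x t :=
        hcop.of_isCoprime_of_dvd_right ⟨q, by linarith [ht]⟩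
      obtain ⟨a, ha⟩ := Int.sq_of_isCoprime hcopt hcancel
      obtain ⟨b, hb⟩ := Int.sq_of_isCoprime hcopt.symm
        (show t * x = e ^ 2 by linear_combination hcancel)
      have ha' : x = a ^ 2 := by
        rcases ha with h | h
        · exact h
        · exfalso; linarith [sq_nonneg a]
      have hb' : t = b ^ 2 := by
        rcases hb with h | h
        · exact h
        · exfalso; linarith [sq_nonneg b]
      have hab : a ^ 2 + 1 = (q : ℤ) * b ^ 2 := by rw [← ha', ht, hb']
      have hq4 : (q : ℤ) % 4 = 3 := by omega
      have sqa := int_sq_mod_four a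
      have sqb := int_sq_mod_four b
      have hqb4 : ((q : ℤ) * b ^ 2) % 4 = 3 * (b ^ 2 % 4) % 4 := by
        rw [Int.mul_emod, hq4]
      generalize hBB : b ^ 2 = B at sqb hqb4 hab
      generalize a ^ 2 = A at sqa hab
      generalize (q : ℤ) * B = Q at hqb4 hab
      omega


private lemma norm_eq_one (q : ℕ) (hq : q.Prime) (hq8 : q % 8 = 7) (εq : ℝ)
    (hε1 : 1 < εq) (hinv : IsIntegral ℤ εq⁻¹) (c' d' : ℤ) (hc : 0 < c') (hd : 0 < d')
    (heq : εq = (c' : ℝ) + (d' : ℝ) * Real.sqrt q) :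
    c' ^ 2 - (q : ℤ) * d' ^ 2 = 1 := by
  have hq0 : (0 : ℝ) ≤ (q : ℝ) := by positivity
  have hr2 : Real.sqrt q ^ 2 = (q : ℝ) := Real.sq_sqrt hq0
  have hirr : Irrational (Real.sqrt q) := hq.irrational_sqrt
  obtain ⟨N, hNdef⟩ : ∃ N : ℤ, N = c' ^ 2 - (q : ℤ) * d' ^ 2 := ⟨_, rfl⟩
  have hprod : εq * ((c' : ℝ) - (d' : ℝ) * Real.sqrt q) = (N : ℝ) := by
    rw [heq, hNdef]; push_cast; linear_combination (-(d' : ℝ) ^ 2) * hr2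
  have hεne : εq ≠ 0 := by linarith
  have hdne : ((d' : ℝ)) ≠ 0 := by exact_mod_cast hd.ne'
  have hN0 : N ≠ 0 := by
    intro h
    rw [h] at hprod
    push_cast at hprod
    rcases mul_eq_zero.mp hprod with h1 | h1
    · exact hεne h1
    · exact hirr ⟨(c' : ℚ) / (d' : ℚ), by push_cast; rw [div_eq_iff hdne]; linarith⟩
  have hNR : ((N : ℝ)) ≠ 0 := by exact_mod_cast hN0
  have hNQ : ((N : ℚ)) ≠ 0 := by exact_mod_cast hN0
  obtain ⟨u, hu_def⟩ : ∃ u : ℝ, u = ((c' : ℝ) - (d' : ℝ) * Real.sqrt q) / (N : ℝ) := ⟨_, rfl⟩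
  have h1 : u * εq = 1 := by
    rw [hu_def, div_mul_eq_mul_div, mul_comm ((c' : ℝ) - (d' : ℝ) * Real.sqrt q) εq, hprod,
      div_self hNR]
  have huinv : u = εq⁻¹ := eq_inv_of_mul_eq_one_left h1
  have hu : IsIntegral ℤ u := by rw [huinv]; exact hinv
  have hu_irr : Irrational u := by
    have h2 : u = ((c' : ℚ) / (N : ℚ) : ℚ) + ((-(d' : ℚ) / (N : ℚ) : ℚ) : ℝ) * Real.sqrt q := by
      rw [hu_def]; push_cast; ring
    rw [h2]
    have hne : (-(d' : ℚ) / (N : ℚ)) ≠ 0 := by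
      apply div_ne_zero _ hNQ
      simpa using (show (d' : ℚ) ≠ 0 by exact_mod_cast hd.ne')
    exact (hirr.ratCast_mul hne).ratCast_add _
  have hkey : ((c' : ℝ) - (d' : ℝ) * Real.sqrt q) ^ 2
      - 2 * (c' : ℝ) * ((c' : ℝ) - (d' : ℝ) * Real.sqrt q) + (N : ℝ) = 0 := by
    rw [hNdef]; push_cast; linear_combination ((d' : ℝ) ^ 2) * hr2
  have h2 : u * (N : ℝ) = (c' : ℝ) - (d' : ℝ) * Real.sqrt q := by
    rw [hu_def]; field_simp
  have h3 : u ^ 2 * (N : ℝ) ^ 2 - 2 * (c' : ℝ) * u * (N : ℝ) + (N : ℝ) = 0 := by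
    linear_combination (u * (N : ℝ) + ((c' : ℝ) - (d' : ℝ) * Real.sqrt q) - 2 * (c' : ℝ)) * h2
      + hkey
  -- the quadratic polynomial over ℚ
  have hroot : Polynomial.aeval u
      (X ^ 2 + C (-(2 * (c' : ℚ) / (N : ℚ))) * X + C (1 / (N : ℚ)) : ℚ[X]) = 0 := by
    simp only [map_add, map_pow, map_mul, aeval_X, aeval_C]
    rw [eq_ratCast, eq_ratCast]
    have h3' : u ^ 2 * (N : ℝ) - 2 * (c' : ℝ) * u + 1 = 0 := by
      apply mul_left_cancel₀ hNR
      linear_combination h3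
    push_cast
    field_simp
    linear_combination h3'
  have huQ : IsIntegral ℚ u := hu.tower_top
  have hnotmem : u ∉ (algebraMap ℚ ℝ).range := by
    rintro ⟨s, hs⟩
    exact hu_irr ⟨s, by rw [← hs, eq_ratCast]⟩
  have h2le : 2 ≤ (minpoly ℚ u).natDegree := (minpoly.two_le_natDegree_iff huQ).mpr hnotmem
  have hPdeg : (X ^ 2 + C (-(2 * (c' : ℚ) / (N : ℚ))) * X + C (1 / (N : ℚ)) : ℚ[X]).natDegree
      = 2 := by
    have h := Polynomial.natDegree_quadratic
      (a := (1 : ℚ)) (b := -(2 * (c' : ℚ) / (N : ℚ))) (c := 1 / (N : ℚ)) one_ne_zero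
    simpa using h
  have hPmonic : (X ^ 2 + C (-(2 * (c' : ℚ) / (N : ℚ))) * X + C (1 / (N : ℚ)) : ℚ[X]).Monic := by
    rw [Polynomial.Monic, Polynomial.leadingCoeff, hPdeg]
    simp [coeff_X_pow]
  obtain ⟨k, hk⟩ := minpoly.dvd ℚ u hroot
  have hm0 : minpoly ℚ u ≠ 0 := minpoly.ne_zero huQ
  have hP0 : (X ^ 2 + C (-(2 * (c' : ℚ) / (N : ℚ))) * X + C (1 / (N : ℚ)) : ℚ[X]) ≠ 0 :=
    hPmonic.ne_zero
  have hk0 : k ≠ 0 := by rintro rfl; rw [mul_zero] at hk; exact hP0 hk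
  have hdegs : (minpoly ℚ u).natDegree + k.natDegree = 2 := by
    rw [← Polynomial.natDegree_mul hm0 hk0, ← hk, hPdeg]
  have hkdeg : k.natDegree = 0 := by omega
  have hklead : k.coeff 0 = 1 := by
    have hl : (X ^ 2 + C (-(2 * (c' : ℚ) / (N : ℚ))) * X + C (1 / (N : ℚ)) : ℚ[X]).leadingCoeff
        = (minpoly ℚ u).leadingCoeff * k.leadingCoeff := by
      rw [hk, Polynomial.leadingCoeff_mul]
    rw [hPmonic.leadingCoeff, (minpoly.monic huQ).leadingCoeff, one_mul] at hl
    rw [Polynomial.leadingCoeff, hkdeg] at hl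
    exact hl.symm
  have hPm : (X ^ 2 + C (-(2 * (c' : ℚ) / (N : ℚ))) * X + C (1 / (N : ℚ)) : ℚ[X])
      = minpoly ℚ u := by
    rw [hk, Polynomial.eq_C_of_natDegree_eq_zero hkdeg, hklead, map_one, mul_one]
  have hmap : minpoly ℚ u = (minpoly ℤ u).map (algebraMap ℤ ℚ) :=
    minpoly.isIntegrallyClosed_eq_field_fractions' ℚ hu
  have hc0' : (((minpoly ℤ u).coeff 0 : ℤ) : ℚ) = 1 / (N : ℚ) := by
    have e1 : (X ^ 2 + C (-(2 * (c' : ℚ) / (N : ℚ))) * X + C (1 / (N : ℚ)) : ℚ[X]).coeff 0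
        = 1 / (N : ℚ) := by
      simp [coeff_X_pow]
    rw [← e1, hPm, hmap, Polynomial.coeff_map]
    simp
  have hmul : N * ((minpoly ℤ u).coeff 0) = 1 := by
    have h5 : ((N * ((minpoly ℤ u).coeff 0) : ℤ) : ℚ) = 1 := by
      push_cast
      rw [hc0']
      field_simp
    exact_mod_cast h5
  rcases Int.isUnit_iff.mp (isUnit_iff_exists_inv.mpr ⟨_, hmul⟩) with h6 | h6
  · rw [← hNdef]; exact h6
  · exfalso
    haveI := Fact.mk hq
    have hexp : c' ^ 2 - (q : ℤ) * d' ^ 2 = -1 := by rw [← hNdef]; exact h6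
    have hmod : ((c' : ZMod q)) ^ 2 = -1 := by
      have h7 := congrArg (fun z : ℤ => (z : ZMod q)) hexp
      push_cast at h7
      rw [ZMod.natCast_self] at h7
      linear_combination h7
    have hsq : IsSquare (-1 : ZMod q) := ⟨(c' : ZMod q), by rw [← hmod]; ring⟩
    have h8 := ZMod.exists_sq_eq_neg_one_iff.mp hsq
    omega

private lemma sqrt_nat_integral (q : ℕ) : IsIntegral ℤ (Real.sqrt q) := by
  have hr2 : Real.sqrt q ^ 2 = (q : ℝ) := Real.sq_sqrt (by positivity)
  refine ⟨X ^ 2 - C (q : ℤ), monic_X_pow_sub_C _ (by norm_num), ?_⟩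
  simp [hr2]

private lemma comb_integral (q : ℕ) (m k : ℤ) :
    IsIntegral ℤ ((m : ℝ) + (k : ℝ) * Real.sqrt q) := by
  have h1 : IsIntegral ℤ ((m : ℝ)) := by
    simpa using isIntegral_algebraMap (R := ℤ) (A := ℝ) (x := m)
  have h2 : IsIntegral ℤ ((k : ℝ)) := by
    simpa using isIntegral_algebraMap (R := ℤ) (A := ℝ) (x := k)
  exact h1.add (h2.mul (sqrt_nat_integral q))

private lemma comb_mem (q : ℕ) (A B : ℤ) :
    ((A : ℝ) + (B : ℝ) * Real.sqrt q) ∈ adjoin ℚ {Real.sqrt (q : ℝ)} := by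
  have hr : Real.sqrt (q : ℝ) ∈ adjoin ℚ {Real.sqrt (q : ℝ)} :=
    subset_adjoin ℚ _ (Set.mem_singleton _)
  exact add_mem (intCast_mem _ A) (mul_mem (intCast_mem _ B) hr)


theorem statement15 (q : ℕ) (hq : q.Prime) (hq8 : q % 8 = 7) (εq : ℝ)
    (hεq : IsFundUnit q εq) (c' d' : ℤ) (hc : 0 < c') (hd : 0 < d')
    (heq : εq = (c' : ℝ) + (d' : ℝ) * Real.sqrt q) :
    (∃ s : ℤ, c' + 1 = s ^ 2) ∧
    ∃ d₁' d₂' : ℤ, 2 * εq = ((d₁' : ℝ) + (d₂' : ℝ) * Real.sqrt q) ^ 2 ∧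
      d₁' ^ 2 - (q : ℤ) * d₂' ^ 2 = 2 := by
  obtain ⟨hε1, ⟨hmem, hint, hinvint⟩, hfund⟩ := hεq
  have hN1 : c' ^ 2 - (q : ℤ) * d' ^ 2 = 1 :=
    norm_eq_one q hq hq8 εq hε1 hinvint c' d' hc hd heq
  have harith := key_arith q hq hq8 c' d' hc hd hN1

  have hr2 : Real.sqrt q ^ 2 = (q : ℝ) := Real.sq_sqrt (by positivity)
  rcases harith with ⟨a, b, ha, hb, h1, h2, hd'⟩ | ⟨a, b, ha, hb, h1, h2, hd', hnorm⟩
  · refine ⟨⟨a, h1⟩, a, b, ?_, ?_⟩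
    · rw [heq]
      have h1R : ((c' : ℝ) + 1) = (a : ℝ) ^ 2 := by exact_mod_cast h1
      have h2R : ((c' : ℝ) - 1) = (q : ℝ) * (b : ℝ) ^ 2 := by exact_mod_cast h2
      have hdR : ((d' : ℝ)) = (a : ℝ) * (b : ℝ) := by exact_mod_cast hd'
      linear_combination h1R + h2R + 2 * Real.sqrt q * hdR - (b : ℝ) ^ 2 * hr2
    · linear_combination -h1 + h2
  · exfalso
    have ha1 : 1 ≤ a := by
      rcases eq_or_lt_of_le ha with h | h
      · exfalso; rw [← h] at h1; simp at h1; omega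
      · omega
    have h1R : ((c' : ℝ) + 1) = 2 * (a : ℝ) ^ 2 := by exact_mod_cast h1
    have h2R : ((c' : ℝ) - 1) = 2 * (q : ℝ) * (b : ℝ) ^ 2 := by exact_mod_cast h2
    have hdR : ((d' : ℝ)) = 2 * ((a : ℝ) * (b : ℝ)) := by exact_mod_cast hd'
    have hη2 : ((a : ℝ) + (b : ℝ) * Real.sqrt q) ^ 2 = εq := by
      rw [heq]
      linear_combination (-1/2 : ℝ) * h1R + (-1/2 : ℝ) * h2R - Real.sqrt q * hdR
        + (b : ℝ) ^ 2 * hr2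
    have hnR : (a : ℝ) ^ 2 - (q : ℝ) * (b : ℝ) ^ 2 = 1 := by exact_mod_cast hnorm
    have hηinv : ((a : ℝ) + (b : ℝ) * Real.sqrt q) * ((a : ℝ) - (b : ℝ) * Real.sqrt q) = 1 := by
      linear_combination hnR - (b : ℝ) ^ 2 * hr2
    have hinv_eq : ((a : ℝ) + (b : ℝ) * Real.sqrt q)⁻¹ = (a : ℝ) - (b : ℝ) * Real.sqrt q :=
      inv_eq_of_mul_eq_one_right hηinv
    obtain ⟨n, hn | hn⟩ := hfund ((a : ℝ) + (b : ℝ) * Real.sqrt q)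
      ⟨comb_mem q a b, comb_integral q a b, by
        rw [hinv_eq, sub_eq_add_neg, ← neg_mul, ← Int.cast_neg]
        exact comb_integral q a (-b)⟩
    · have hε0 : (0 : ℝ) < εq := by linarith
      have hzw : εq ^ (n * 2) = εq ^ (1 : ℤ) := by
        calc εq ^ (n * 2) = (εq ^ n) ^ (2 : ℤ) := zpow_mul εq n 2
          _ = (εq ^ n) ^ (2 : ℕ) := by norm_cast
          _ = εq := by rw [← hn]; exact hη2
          _ = εq ^ (1 : ℤ) := (zpow_one εq).symm
      have h2n : n * 2 = 1 := zpow_right_injective₀ hε0 (by linarith) hzw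
      omega
    · have hp : (0 : ℝ) < εq ^ n := zpow_pos (by linarith) n
      have hηpos : (0 : ℝ) < (a : ℝ) + (b : ℝ) * Real.sqrt q := by
        have haR : (1 : ℝ) ≤ (a : ℝ) := by exact_mod_cast ha1
        have h0 : (0 : ℝ) ≤ (b : ℝ) * Real.sqrt q :=
          mul_nonneg (by exact_mod_cast hb) (Real.sqrt_nonneg _)
        linarith
      rw [hn] at hηpos
      linarith
end
end
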